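/- arXiv:1107.4402 — 11 statements merged into one kernel-verified Lean document; each statement's English description precedes it below -/
import Mathlib

section
/- Let (L, ν) be a finite measure space and let Ψ : ℝ → ℝ be a nonnegative convex function. Suppose that for ν-almost every l ∈ L we are given a finite nonempty set S(l) ⊂ ℝ and a real number h(l) with min S(l) ≤ h(l) ≤ max S(l), that h is measurable and ν-integrable with ∫_L h dν = 0, and that l ↦ Σ_{r ∈ S(l)} Ψ(r) is measurable. Then ∫_L (Σ_{r ∈ S(l)} Ψ(r)) dν(l) ≥ Ψ(0) · ν(L). -/
open MeasureTheory Filter Set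

/-- A convex function on `ℝ` admits a supporting line at `0`. -/
lemma exists_support_at_zero (Ψ : ℝ → ℝ) (hΨconv : ConvexOn ℝ Set.univ Ψ) :
    ∃ c : ℝ, ∀ x : ℝ, Ψ 0 + c * x ≤ Ψ x := by
  set g : ℝ → ℝ := fun x => (Ψ x - Ψ 0) / (x - 0) with hg
  have hmono : ∀ x y : ℝ, x ≠ 0 → y ≠ 0 → x ≤ y → g x ≤ g y := fun x y hx hy hxy =>
    hΨconv.secant_mono (Set.mem_univ 0) (Set.mem_univ x) (Set.mem_univ y) hx hy hxy
  have hne : (g '' Set.Iio 0).Nonempty := ⟨g (-1), ⟨-1, by norm_num, rfl⟩⟩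
  have hbdd : BddAbove (g '' Set.Iio 0) := by
    refine ⟨g 1, ?_⟩
    rintro _ ⟨y, hy, rfl⟩
    exact hmono y 1 (ne_of_lt hy) one_ne_zero (le_of_lt (lt_trans hy one_pos))
  set c := sSup (g '' Set.Iio 0) with hcdef
  refine ⟨c, fun x => ?_⟩
  rcases lt_trichotomy x 0 with hx | hx | hx
  · have hgx : g x ≤ c := le_csSup hbdd ⟨x, hx, rfl⟩
    have : c * x ≤ Ψ x - Ψ 0 := by
      rw [← div_le_iff_of_neg hx]
      simpa [hg] using hgx
    linarith
  · subst hx; simp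
  · have hgx : c ≤ g x := by
      refine csSup_le hne ?_
      rintro _ ⟨y, hy, rfl⟩
      exact hmono y x (ne_of_lt hy) (ne_of_gt hx) (le_of_lt (lt_trans hy hx))
    have : c * x ≤ Ψ x - Ψ 0 := by
      rw [← le_div_iff₀ hx]
      simpa [hg] using hgx
    linarith

/-- Let `(L, ν)` be a finite measure space and `Ψ : ℝ → ℝ` a nonnegative
convex function.  Suppose that for `ν`-a.e. `l` we are given a finite nonempty set
`S l ⊆ ℝ` and a real `h l` with `min (S l) ≤ h l ≤ max (S l)`, that `h` is measurable and
integrable with `∫ h dν = 0`, and that `l ↦ ∑ r ∈ S l, Ψ r` is measurable.  Then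
`∫ (∑ r ∈ S l, Ψ r) dν ≥ Ψ 0 · ν L`. -/
theorem stmt_0 {L : Type*} [MeasurableSpace L] (ν : Measure L) [IsFiniteMeasure ν]
    (Ψ : ℝ → ℝ) (hΨnn : ∀ x : ℝ, 0 ≤ Ψ x) (hΨconv : ConvexOn ℝ Set.univ Ψ)
    (S : L → Finset ℝ) (h : L → ℝ)
    (hSh : ∀ᵐ l ∂ν, ∃ hne : (S l).Nonempty,
      (S l).min' hne ≤ h l ∧ h l ≤ (S l).max' hne)
    (hmeas : Measurable h) (hint : Integrable h ν)
    (hzero : ∫ l, h l ∂ν = 0)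
    (hSmeas : Measurable fun l => ∑ r ∈ S l, Ψ r) :
    ENNReal.ofReal (Ψ 0) * ν Set.univ ≤
      ∫⁻ l, ENNReal.ofReal (∑ r ∈ S l, Ψ r) ∂ν := by
  obtain ⟨c, hc⟩ := exists_support_at_zero Ψ hΨconv
  set f : L → ℝ := fun l => Ψ 0 + c * h l with hf
  have hfint : Integrable f ν := (integrable_const (Ψ 0)).add (hint.const_mul c)
  have hfI : ∫ l, f l ∂ν = Ψ 0 * (ν Set.univ).toReal := by
    rw [hf, integral_add (integrable_const _) (hint.const_mul c), integral_const,
      integral_const_mul, hzero]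
    simp [mul_comm, Measure.real]
  -- pointwise a.e. : f l ≤ ∑ r ∈ S l, Ψ r
  have hae : ∀ᵐ l ∂ν, f l ≤ ∑ r ∈ S l, Ψ r := by
    filter_upwards [hSh] with l ⟨hne, h1, h2⟩
    have hseg : h l ∈ segment ℝ ((S l).min' hne) ((S l).max' hne) := by
      rw [segment_eq_Icc ((S l).min'_le _ ((S l).max'_mem hne))]
      exact ⟨h1, h2⟩
    have hΨh : Ψ (h l) ≤ max (Ψ ((S l).min' hne)) (Ψ ((S l).max' hne)) :=
      hΨconv.le_on_segment (Set.mem_univ _) (Set.mem_univ _) hseg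
    have hsum : max (Ψ ((S l).min' hne)) (Ψ ((S l).max' hne)) ≤ ∑ r ∈ S l, Ψ r := by
      refine max_le ?_ ?_ <;>
        exact Finset.single_le_sum (fun i _ => hΨnn i) (by simp [Finset.min'_mem, Finset.max'_mem])
    exact le_trans (hc (h l)) (le_trans hΨh hsum)
  -- pass to f⁺ := max f 0
  have hfp : Integrable (fun l => max (f l) 0) ν := hfint.pos_part
  have h1 : Ψ 0 * (ν Set.univ).toReal ≤ ∫ l, max (f l) 0 ∂ν := by
    rw [← hfI]
    exact integral_mono hfint hfp (fun l => le_max_left _ _)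
  have h2 : ∫⁻ l, ENNReal.ofReal (max (f l) 0) ∂ν =
      ENNReal.ofReal (∫ l, max (f l) 0 ∂ν) :=
    (ofReal_integral_eq_lintegral_ofReal hfp
      (Filter.Eventually.of_forall fun l => le_max_right _ _)).symm
  have h3 : ∫⁻ l, ENNReal.ofReal (max (f l) 0) ∂ν ≤
      ∫⁻ l, ENNReal.ofReal (∑ r ∈ S l, Ψ r) ∂ν := by
    refine lintegral_mono_ae ?_
    filter_upwards [hae] with l hl
    refine ENNReal.ofReal_le_ofReal (max_le hl ?_)
    exact Finset.sum_nonneg fun i _ => hΨnn i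
  calc ENNReal.ofReal (Ψ 0) * ν Set.univ
      = ENNReal.ofReal (Ψ 0 * (ν Set.univ).toReal) := by
        rw [ENNReal.ofReal_mul (hΨnn 0), ENNReal.ofReal_toReal (measure_ne_top ν _)]
    _ ≤ ENNReal.ofReal (∫ l, max (f l) 0 ∂ν) := ENNReal.ofReal_le_ofReal h1
    _ = ∫⁻ l, ENNReal.ofReal (max (f l) 0) ∂ν := h2.symm
    _ ≤ _ := h3
end

section
/- Let (L, ν) be a finite measure space, let A < B in [−∞, ∞], let n ≥ 2 be an integer, and let Ψ_S, Ψ_V, g : (A,B) → (0,∞) be continuous. Fix r₀ ∈ (A,B) and define s(r) = ∫_{r₀}^{r} Ψ_V(t) g(t)^{n−1} dt (assumed finite for all r ∈ (A,B)). Assume there exists a convex function F on the interval s((A,B)) such that Ψ_S(r) g(r)^{n−1} = F(s(r)) for all r ∈ (A,B). Then for every measurable u : L → (A,B) such that s ∘ u is ν-integrable and ∫_L s(u(l)) dν(l) = 0, one has ∫_L Ψ_S(u(l)) g(u(l))^{n−1} dν(l) ≥ Ψ_S(r₀) g(r₀)^{n−1} ν(L). -/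
open MeasureTheory Filter Set

private lemma ofReal_integral_le_lintegral {L : Type*} [MeasurableSpace L] (ν : Measure L)
    (f : L → ℝ) (hf : Integrable f ν) :
    ENNReal.ofReal (∫ l, f l ∂ν) ≤ ∫⁻ l, ENNReal.ofReal (f l) ∂ν := by
  calc ENNReal.ofReal (∫ l, f l ∂ν)
      ≤ ENNReal.ofReal (∫ l, max (f l) 0 ∂ν) := by
        exact ENNReal.ofReal_le_ofReal
          (integral_mono hf hf.pos_part fun l => le_max_left _ _)
    _ = ∫⁻ l, ENNReal.ofReal (max (f l) 0) ∂ν :=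
        ofReal_integral_eq_lintegral_ofReal hf.pos_part
          (ae_of_all _ fun l => le_max_right _ _)
    _ = ∫⁻ l, ENNReal.ofReal (f l) ∂ν := by
        refine lintegral_congr fun l => ?_
        rcases le_or_gt 0 (f l) with h | h
        · rw [max_eq_left h]
        · rw [max_eq_right h.le, ENNReal.ofReal_eq_zero.2 le_rfl,
            Eq.comm, ENNReal.ofReal_eq_zero]
          exact h.le

/-- In a warped product `(A,B) ×_g L` with product densities, if the
fiberwise surface-area density `Ψ_S(r) g(r)^{n-1}` is a convex function of the volume
coordinate `s(r) = ∫_{r₀}^r Ψ_V g^{n-1}`, then for every graph `u : L → (A,B)` enclosing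
net volume `0` with the fiber `{r₀} × L`, the vertical surface area of the graph is at
least the surface area of the fiber. -/
theorem stmt_1 {L : Type*} [MeasurableSpace L] (ν : Measure L) [IsFiniteMeasure ν]
    (A B : EReal) (hAB : A < B) (n : ℕ) (hn : 2 ≤ n)
    (ΨS ΨV g : ℝ → ℝ)
    (I : Set ℝ) (hI : I = {r : ℝ | A < (r : EReal) ∧ (r : EReal) < B})
    (hΨS : ContinuousOn ΨS I) (hΨSpos : ∀ r ∈ I, 0 < ΨS r)
    (hΨV : ContinuousOn ΨV I) (hΨVpos : ∀ r ∈ I, 0 < ΨV r)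
    (hg : ContinuousOn g I) (hgpos : ∀ r ∈ I, 0 < g r)
    (r₀ : ℝ) (hr₀ : r₀ ∈ I)
    (s : ℝ → ℝ) (hs : ∀ r ∈ I, s r = ∫ t in r₀..r, ΨV t * g t ^ (n - 1))
    (hsint : ∀ r ∈ I, IntervalIntegrable (fun t => ΨV t * g t ^ (n - 1)) volume r₀ r)
    (F : ℝ → ℝ) (hF : ConvexOn ℝ (s '' I) F)
    (hFs : ∀ r ∈ I, ΨS r * g r ^ (n - 1) = F (s r))
    (u : L → ℝ) (hu : Measurable u) (huI : ∀ l, u l ∈ I)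
    (hsu : Integrable (fun l => s (u l)) ν)
    (hsu0 : ∫ l, s (u l) ∂ν = 0) :
    ENNReal.ofReal (ΨS r₀ * g r₀ ^ (n - 1)) * ν Set.univ ≤
      ∫⁻ l, ENNReal.ofReal (ΨS (u l) * g (u l) ^ (n - 1)) ∂ν := by
  -- basic facts
  have hsr0 : s r₀ = 0 := by rw [hs r₀ hr₀, intervalIntegral.integral_same]
  -- I is open
  have hIopen : IsOpen I := by
    have : I = (fun r : ℝ => (r : EReal)) ⁻¹' (Set.Ioo A B) := by
      rw [hI]; rfl
    rw [this]
    exact isOpen_Ioo.preimage continuous_coe_real_ereal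
  -- I is order-connected
  have hIconn : ∀ x ∈ I, ∀ y ∈ I, Set.Icc x y ⊆ I := by
    intro x hx y hy z hz
    rw [hI] at hx hy ⊢
    exact ⟨lt_of_lt_of_le hx.1 (EReal.coe_le_coe_iff.2 hz.1),
      lt_of_le_of_lt (EReal.coe_le_coe_iff.2 hz.2) hy.2⟩
  -- points around r₀
  obtain ⟨ε, hε, hball⟩ := Metric.isOpen_iff.mp hIopen r₀ hr₀
  set r₁ := r₀ - ε / 2 with hr₁def
  set r₂ := r₀ + ε / 2 with hr₂def
  have hr₁ : r₁ ∈ I := by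
    apply hball
    simp only [Metric.mem_ball, Real.dist_eq, hr₁def]
    rw [abs_of_nonpos (by linarith)]
    linarith
  have hr₂ : r₂ ∈ I := by
    apply hball
    simp only [Metric.mem_ball, Real.dist_eq, hr₂def]
    rw [abs_of_nonneg (by linarith)]
    linarith
  have hr₁lt : r₁ < r₀ := by simp [hr₁def]; linarith
  have hr₂gt : r₀ < r₂ := by simp [hr₂def]; linarith
  have hfpos : ∀ x ∈ I, 0 < ΨV x * g x ^ (n - 1) :=
    fun x hx => mul_pos (hΨVpos x hx) (pow_pos (hgpos x hx) _)
  have hb : 0 < s r₂ := by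
    rw [hs r₂ hr₂]
    exact intervalIntegral.intervalIntegral_pos_of_pos_on (hsint r₂ hr₂)
      (fun x hx => hfpos x (hIconn r₀ hr₀ r₂ hr₂ (Set.Ioo_subset_Icc_self hx))) hr₂gt
  have ha : s r₁ < 0 := by
    rw [hs r₁ hr₁, intervalIntegral.integral_symm, neg_lt, neg_zero]
    exact intervalIntegral.intervalIntegral_pos_of_pos_on ((hsint r₁ hr₁).symm)
      (fun x hx => hfpos x (hIconn r₁ hr₁ r₀ hr₀ (Set.Ioo_subset_Icc_self hx))) hr₁lt
  -- construct a supporting line of F at 0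
  set K := s '' I with hKdef
  have h0K : (0 : ℝ) ∈ K := ⟨r₀, hr₀, hsr0⟩
  have haK : s r₁ ∈ K := ⟨r₁, hr₁, rfl⟩
  have hbK : s r₂ ∈ K := ⟨r₂, hr₂, rfl⟩
  set S := (fun y => slope F 0 y) '' (K ∩ Set.Ioi 0) with hSdef
  have hSne : S.Nonempty := ⟨slope F 0 (s r₂), ⟨s r₂, ⟨hbK, hb⟩, rfl⟩⟩
  have hSbdd : BddBelow S := by
    refine ⟨slope F (s r₁) 0, ?_⟩
    rintro _ ⟨y, ⟨hyK, hy⟩, rfl⟩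
    simpa [slope_def_field] using hF.slope_mono_adjacent haK hyK ha hy
  set c := sInf S with hcdef
  have hsupport : ∀ x ∈ K, F 0 + c * x ≤ F x := by
    intro x hxK
    rcases lt_trichotomy x 0 with hx | hx | hx
    · have h1 : slope F x 0 ≤ c := by
        apply le_csInf hSne
        rintro _ ⟨y, ⟨hyK, hy⟩, rfl⟩
        simpa [slope_def_field] using hF.slope_mono_adjacent hxK hyK hx hy
      rw [slope_def_field] at h1
      rw [div_le_iff₀ (by linarith : (0:ℝ) < 0 - x)] at h1
      nlinarith
    · simp [hx]
    · have h1 : c ≤ slope F 0 x := csInf_le hSbdd ⟨x, ⟨hxK, hx⟩, rfl⟩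
      rw [slope_def_field] at h1
      rw [le_div_iff₀ (by linarith : (0:ℝ) < x - 0)] at h1
      nlinarith
  -- F 0 is the fiber density
  have hF0 : F 0 = ΨS r₀ * g r₀ ^ (n - 1) := by
    rw [hFs r₀ hr₀, hsr0]
  have hF0pos : 0 < F 0 := by
    rw [hF0]; exact mul_pos (hΨSpos r₀ hr₀) (pow_pos (hgpos r₀ hr₀) _)
  -- the affine minorant
  set h : L → ℝ := fun l => F 0 + c * s (u l) with hhdef
  have hhint : Integrable h ν := (integrable_const (F 0)).add (hsu.const_mul c)
  have hhle : ∀ l, h l ≤ ΨS (u l) * g (u l) ^ (n - 1) := by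
    intro l
    rw [hFs (u l) (huI l)]
    exact hsupport (s (u l)) ⟨u l, huI l, rfl⟩
  have hhint_eq : ∫ l, h l ∂ν = F 0 * (ν Set.univ).toReal := by
    rw [hhdef]
    simp only
    rw [integral_add (integrable_const (F 0)) (hsu.const_mul c),
      integral_const, integral_const_mul, hsu0, mul_zero, add_zero,
      smul_eq_mul, mul_comm, Measure.real]
  calc ENNReal.ofReal (ΨS r₀ * g r₀ ^ (n - 1)) * ν Set.univ
      = ENNReal.ofReal (F 0 * (ν Set.univ).toReal) := by
        rw [ENNReal.ofReal_mul hF0pos.le, ENNReal.ofReal_toReal (measure_ne_top ν _), hF0]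
    _ = ENNReal.ofReal (∫ l, h l ∂ν) := by rw [hhint_eq]
    _ ≤ ∫⁻ l, ENNReal.ofReal (h l) ∂ν := ofReal_integral_le_lintegral ν h hhint
    _ ≤ ∫⁻ l, ENNReal.ofReal (ΨS (u l) * g (u l) ^ (n - 1)) ∂ν :=
        lintegral_mono fun l => ENNReal.ofReal_le_ofReal (hhle l)
end

section
/- Let n ≥ 2, let σ denote the (n−1)-dimensional Hausdorff measure on the unit sphere S^{n−1} ⊂ ℝⁿ, let Ψ_S, Ψ_V : (0,∞) → (0,∞) be continuous, fix r₀ > 0, and set w(ρ) = ∫_{r₀}^{ρ} Ψ_V(t) t^{n−1} dt (assumed finite for all ρ > 0). Assume there exists a convex function F on w((0,∞)) with Ψ_S(ρ) ρ^{n−1} = F(w(ρ)) for all ρ > 0. Then for every measurable u : S^{n−1} → (0,∞) with w ∘ u σ-integrable and ∫_{S^{n−1}} w(u(θ)) dσ(θ) = 0, one has ∫_{S^{n−1}} Ψ_S(u(θ)) u(θ)^{n−1} dσ(θ) ≥ Ψ_S(r₀) r₀^{n−1} σ(S^{n−1}). In other words, among boundaries of star-shaped regions enclosing the same weighted volume as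 the ball of radius r₀, the sphere of radius r₀ minimizes tangential surface area. -/
open MeasureTheory Filter Set

lemma my_ofReal_integral_le {α} [MeasurableSpace α] {ν : Measure α} {g : α → ℝ}
    (hg : Integrable g ν) :
    ENNReal.ofReal (∫ x, g x ∂ν) ≤ ∫⁻ x, ENNReal.ofReal (g x) ∂ν := by
  have h1 : ∫ x, g x ∂ν ≤ ∫ x, max (g x) 0 ∂ν :=
    integral_mono hg hg.pos_part (fun x => le_max_left _ _)
  have h2 : ENNReal.ofReal (∫ x, max (g x) 0 ∂ν) = ∫⁻ x, ENNReal.ofReal (max (g x) 0) ∂ν :=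
    ofReal_integral_eq_lintegral_ofReal hg.pos_part
      (Filter.Eventually.of_forall fun x => le_max_right _ _)
  have h3 : ∀ x, ENNReal.ofReal (max (g x) 0) = ENNReal.ofReal (g x) := by
    intro x
    rcases le_total (g x) 0 with h | h
    · rw [max_eq_right h, ENNReal.ofReal_zero, eq_comm, ENNReal.ofReal_eq_zero]; exact h
    · rw [max_eq_left h]
  calc ENNReal.ofReal (∫ x, g x ∂ν) ≤ ENNReal.ofReal (∫ x, max (g x) 0 ∂ν) :=
        ENNReal.ofReal_le_ofReal h1
    _ = ∫⁻ x, ENNReal.ofReal (max (g x) 0) ∂ν := h2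
    _ = ∫⁻ x, ENNReal.ofReal (g x) ∂ν := by simp only [h3]

lemma my_subgrad {s : Set ℝ} {F : ℝ → ℝ} (hF : ConvexOn ℝ s F) {a b : ℝ}
    (ha : a ∈ s) (hb : b ∈ s) (ha0 : a < 0) (hb0 : 0 < b) :
    ∃ m : ℝ, ∀ x ∈ s, F 0 + m * x ≤ F x := by
  set T : Set ℝ := (fun y => (F y - F 0) / (y - 0)) '' (s ∩ Ioi 0) with hT
  have hTne : T.Nonempty := ⟨_, ⟨b, ⟨hb, hb0⟩, rfl⟩⟩
  have hlb : ∀ t ∈ T, (F 0 - F a) / (0 - a) ≤ t := by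
    rintro t ⟨y, ⟨hy, hy0⟩, rfl⟩
    exact hF.slope_mono_adjacent ha hy ha0 hy0
  refine ⟨sInf T, fun x hx => ?_⟩
  rcases lt_trichotomy x 0 with h | h | h
  · have h1 : (F 0 - F x) / (0 - x) ≤ sInf T := by
      refine le_csInf hTne ?_
      rintro t ⟨y, ⟨hy, hy0⟩, rfl⟩
      exact hF.slope_mono_adjacent hx hy h hy0
    rw [div_le_iff₀ (by linarith)] at h1
    nlinarith
  · subst h; simp
  · have h1 : sInf T ≤ (F x - F 0) / (x - 0) :=
      csInf_le ⟨_, hlb⟩ ⟨x, ⟨hx, h⟩, rfl⟩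
    rw [le_div_iff₀ (by linarith)] at h1
    nlinarith

/-- In `ℝⁿ ∖ {0}` with radial surface density `Ψ_S` and radial volume
density `Ψ_V`, if the weighted surface area of spheres is a convex function of the
weighted volume of annuli, then among boundaries of star-shaped regions enclosing the
same weighted volume as the ball of radius `r₀`, the sphere of radius `r₀` minimizes
tangential surface area.  Here `σ = μH[n-1]` is the `(n-1)`-dimensional Hausdorff measure
on the unit sphere. -/
theorem stmt_3 (n : ℕ) (hn : 2 ≤ n)
    (ΨS ΨV : ℝ → ℝ)
    (hΨS : ContinuousOn ΨS (Set.Ioi 0)) (hΨSpos : ∀ r > (0:ℝ), 0 < ΨS r)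
    (hΨV : ContinuousOn ΨV (Set.Ioi 0)) (hΨVpos : ∀ r > (0:ℝ), 0 < ΨV r)
    (r₀ : ℝ) (hr₀ : 0 < r₀)
    (w : ℝ → ℝ) (hw : ∀ ρ > (0:ℝ), w ρ = ∫ t in r₀..ρ, ΨV t * t ^ (n - 1))
    (hwint : ∀ ρ > (0:ℝ),
      IntervalIntegrable (fun t => ΨV t * t ^ (n - 1)) volume r₀ ρ)
    (F : ℝ → ℝ) (hF : ConvexOn ℝ (w '' Set.Ioi 0) F)
    (hFw : ∀ ρ > (0:ℝ), ΨS ρ * ρ ^ (n - 1) = F (w ρ))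
    (u : EuclideanSpace ℝ (Fin n) → ℝ) (hu : Measurable u)
    (hupos : ∀ θ ∈ Metric.sphere (0 : EuclideanSpace ℝ (Fin n)) 1, 0 < u θ)
    (hwu : IntegrableOn (fun θ => w (u θ))
      (Metric.sphere (0 : EuclideanSpace ℝ (Fin n)) 1) (μH[(n : ℝ) - 1]))
    (hwu0 : ∫ θ in Metric.sphere (0 : EuclideanSpace ℝ (Fin n)) 1,
      w (u θ) ∂(μH[(n : ℝ) - 1]) = 0) :
    ENNReal.ofReal (ΨS r₀ * r₀ ^ (n - 1)) *
        μH[(n : ℝ) - 1] (Metric.sphere (0 : EuclideanSpace ℝ (Fin n)) 1) ≤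
      ∫⁻ θ in Metric.sphere (0 : EuclideanSpace ℝ (Fin n)) 1,
        ENNReal.ofReal (ΨS (u θ) * u θ ^ (n - 1)) ∂(μH[(n : ℝ) - 1]) := by
  set S := Metric.sphere (0 : EuclideanSpace ℝ (Fin n)) 1 with hS
  set μ := (μH[(n : ℝ) - 1] : Measure (EuclideanSpace ℝ (Fin n))) with hμ
  set ν := μ.restrict S with hν
  -- `w r₀ = 0`, so the constant on the left is `F 0`.
  have hw0 : w r₀ = 0 := by rw [hw r₀ hr₀, intervalIntegral.integral_same]
  have hF0 : ΨS r₀ * r₀ ^ (n - 1) = F 0 := by rw [hFw r₀ hr₀, hw0]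
  have hF0pos : 0 < F 0 := by
    rw [← hF0]; exact mul_pos (hΨSpos r₀ hr₀) (pow_pos hr₀ _)
  -- points of the image set on both sides of `0`
  have hpos_int : ∀ x ∈ Ioi (0:ℝ), 0 < ΨV x * x ^ (n - 1) := fun x hx =>
    mul_pos (hΨVpos x hx) (pow_pos hx _)
  have ha : w (r₀ / 2) < 0 := by
    have h1 : 0 < ∫ t in (r₀ / 2)..r₀, ΨV t * t ^ (n - 1) := by
      refine intervalIntegral.intervalIntegral_pos_of_pos_on
        ((hwint (r₀ / 2) (by linarith)).symm) (fun x hx => hpos_int x ?_) (by linarith)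
      have := hx.1; simp only [mem_Ioi]; linarith
    rw [hw (r₀ / 2) (by linarith), intervalIntegral.integral_symm]
    linarith
  have hb : 0 < w (2 * r₀) := by
    have h1 : 0 < ∫ t in r₀..(2 * r₀), ΨV t * t ^ (n - 1) := by
      refine intervalIntegral.intervalIntegral_pos_of_pos_on
        (hwint (2 * r₀) (by linarith)) (fun x hx => hpos_int x ?_) (by linarith)
      have := hx.1; simp only [mem_Ioi]; linarith
    rw [hw (2 * r₀) (by linarith)]
    exact h1
  have haS : w (r₀ / 2) ∈ w '' Ioi 0 := ⟨r₀ / 2, by simp only [mem_Ioi]; linarith, rfl⟩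
  have hbS : w (2 * r₀) ∈ w '' Ioi 0 := ⟨2 * r₀, by simp only [mem_Ioi]; linarith, rfl⟩
  obtain ⟨m, hm⟩ := my_subgrad hF haS hbS ha hb
  -- the pointwise lower bound on the sphere
  have key : ∀ θ ∈ S, F 0 + m * w (u θ) ≤ ΨS (u θ) * u θ ^ (n - 1) := by
    intro θ hθ
    rw [hFw _ (hupos θ hθ)]
    exact hm _ ⟨u θ, hupos θ hθ, rfl⟩
  have hmono : ∫⁻ θ in S, ENNReal.ofReal (F 0 + m * w (u θ)) ∂μ ≤
      ∫⁻ θ in S, ENNReal.ofReal (ΨS (u θ) * u θ ^ (n - 1)) ∂μ := by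
    refine lintegral_mono_ae ?_
    filter_upwards [ae_restrict_mem Metric.isClosed_sphere.measurableSet] with θ hθ
    exact ENNReal.ofReal_le_ofReal (key θ hθ)
  rw [hF0]
  refine le_trans ?_ hmono
  -- now show `ofReal (F 0) * μ S ≤ ∫⁻ θ in S, ofReal (F 0 + m * w (u θ)) ∂μ`
  have hwu' : Integrable (fun θ => w (u θ)) ν := hwu
  have hmwu : Integrable (fun θ => m * w (u θ)) ν := hwu'.const_mul m
  by_cases hfin : μ S < ⊤
  · -- finite measure case
    haveI : IsFiniteMeasure ν := ⟨by rwa [hν, Measure.restrict_apply_univ]⟩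
    have hgint : Integrable (fun θ => F 0 + m * w (u θ)) ν :=
      (integrable_const _).add hmwu
    have hI : ∫ θ, (F 0 + m * w (u θ)) ∂ν = F 0 * (μ S).toReal := by
      rw [integral_add (integrable_const _) hmwu, integral_const, integral_const_mul]
      have h0 : ∫ θ, w (u θ) ∂ν = 0 := hwu0
      rw [h0, mul_zero, add_zero, hν, measureReal_restrict_apply_univ, measureReal_def, smul_eq_mul, mul_comm]
    calc ENNReal.ofReal (F 0) * μ S = ENNReal.ofReal (F 0 * (μ S).toReal) := by
          rw [ENNReal.ofReal_mul hF0pos.le, ENNReal.ofReal_toReal hfin.ne]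
      _ = ENNReal.ofReal (∫ θ, (F 0 + m * w (u θ)) ∂ν) := by rw [hI]
      _ ≤ ∫⁻ θ, ENNReal.ofReal (F 0 + m * w (u θ)) ∂ν := my_ofReal_integral_le hgint
  · -- infinite measure case: the right-hand side is infinite
    push_neg at hfin
    have hinf : μ S = ⊤ := top_le_iff.mp hfin
    -- measurable representative of `m * w (u θ)`
    set g := hmwu.1.mk (fun θ => m * w (u θ)) with hg
    have hgm : StronglyMeasurable g := hmwu.1.stronglyMeasurable_mk
    have hgeq : (fun θ => m * w (u θ)) =ᵐ[ν] g := hmwu.1.ae_eq_mk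
    have hgint : Integrable g ν := hmwu.congr hgeq
    set B : Set (EuclideanSpace ℝ (Fin n)) := {x | F 0 / 2 ≤ ‖g x‖} with hB
    have hBmeas : MeasurableSet B :=
      hgm.measurable.norm measurableSet_Ici
    have hBfin : ν B < ⊤ := hgint.measure_norm_ge_lt_top (by linarith)
    have hBcinf : ν Bᶜ = ⊤ := by
      by_contra hc
      have h1 : ν univ ≤ ν B + ν Bᶜ := by
        rw [← union_compl_self B]; exact measure_union_le _ _
      rw [hν, Measure.restrict_apply_univ, hinf] at h1
      exact (h1.trans_lt (ENNReal.add_lt_top.mpr ⟨hBfin, lt_top_iff_ne_top.mpr hc⟩)).ne rfl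
    have hlow : ∀ᵐ θ ∂(ν.restrict Bᶜ),
        ENNReal.ofReal (F 0 / 2) ≤ ENNReal.ofReal (F 0 + m * w (u θ)) := by
      filter_upwards [ae_restrict_mem hBmeas.compl, ae_restrict_of_ae hgeq] with θ hθ heq
      refine ENNReal.ofReal_le_ofReal ?_
      have h1 : ‖g θ‖ < F 0 / 2 := lt_of_not_ge hθ
      have h2 : |m * w (u θ)| < F 0 / 2 := by rw [heq]; rwa [Real.norm_eq_abs] at h1
      have h3 := abs_lt.mp h2
      linarith [h3.1]
    have hint : (⊤ : ENNReal) ≤ ∫⁻ θ, ENNReal.ofReal (F 0 + m * w (u θ)) ∂ν := by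
      calc (⊤ : ENNReal) = ENNReal.ofReal (F 0 / 2) * ν Bᶜ := by
            rw [hBcinf, ENNReal.mul_top (by simp [ENNReal.ofReal_eq_zero]; linarith)]
        _ = ∫⁻ _ in Bᶜ, ENNReal.ofReal (F 0 / 2) ∂ν := by rw [setLIntegral_const]
        _ ≤ ∫⁻ θ in Bᶜ, ENNReal.ofReal (F 0 + m * w (u θ)) ∂ν := lintegral_mono_ae hlow
        _ ≤ ∫⁻ θ, ENNReal.ofReal (F 0 + m * w (u θ)) ∂ν := setLIntegral_le_lintegral _ _
    exact le_trans le_top hint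
end

section
/- Let (L, ν) be a finite measure space, let Ψ : (0,∞) → (0,∞) be convex with lim_{r→0⁺} Ψ(r) = 0, and let r₀ > 0. Let R ⊂ (0,∞) × L be a measurable set such that for ν-almost every l ∈ L the slice R_l = {r : (r,l) ∈ R} is a finite union of bounded intervals, and such that (λ ⊗ ν)(R) = r₀ · ν(L), where λ is Lebesgue measure on (0,∞). For each l let E(l) ⊂ (0,∞) be the set of topological boundary points of R_l in (0,∞), and assume l ↦ Σ_{r ∈ E(l)} Ψ(r) is measurable. Then ∫_L (Σ_{r ∈ E(l)} Ψ(r)) dν(l) ≥ Ψ(r₀) · ν(L). -/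
open MeasureTheory Filter Set

/-- Scaling: convex with limit 0 at 0⁺ gives `Ψ x ≤ (x/y) Ψ y` for `0 < x ≤ y`. -/
lemma psi_scale (Ψ : ℝ → ℝ) (hΨconv : ConvexOn ℝ (Set.Ioi 0) Ψ)
    (hΨ0 : Tendsto Ψ (nhdsWithin 0 (Set.Ioi 0)) (nhds 0))
    {x y : ℝ} (hx : 0 < x) (hxy : x ≤ y) : Ψ x ≤ x / y * Ψ y := by
  rcases eq_or_lt_of_le hxy with rfl | hlt
  · rw [div_self hx.ne', one_mul]
  have hy : 0 < y := hx.trans hlt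
  have c1 : ContinuousAt (fun t : ℝ => (y - x) / (y - t)) 0 :=
    ContinuousAt.div continuousAt_const (continuousAt_const.sub continuousAt_id)
      (by simpa using hy.ne')
  have c2 : ContinuousAt (fun t : ℝ => (x - t) / (y - t)) 0 :=
    ContinuousAt.div (continuousAt_const.sub continuousAt_id)
      (continuousAt_const.sub continuousAt_id) (by simpa using hy.ne')
  have htend : Tendsto (fun t => (y - x) / (y - t) * Ψ t + (x - t) / (y - t) * Ψ y)
      (nhdsWithin 0 (Set.Ioi 0)) (nhds ((y - x) / (y - 0) * 0 + (x - 0) / (y - 0) * Ψ y)) :=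
    Tendsto.add (((c1.tendsto.mono_left nhdsWithin_le_nhds)).mul hΨ0)
      (((c2.tendsto.mono_left nhdsWithin_le_nhds)).mul tendsto_const_nhds)
  have hev : ∀ᶠ t in nhdsWithin 0 (Set.Ioi 0),
      Ψ x ≤ (y - x) / (y - t) * Ψ t + (x - t) / (y - t) * Ψ y := by
    filter_upwards [self_mem_nhdsWithin,
      (eventually_lt_nhds hx).filter_mono nhdsWithin_le_nhds] with t ht htx
    have ht0 : (0:ℝ) < t := ht
    have hty : 0 < y - t := by linarith
    have ha : (0:ℝ) ≤ (y - x) / (y - t) := div_nonneg (by linarith) hty.le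
    have hb : (0:ℝ) ≤ (x - t) / (y - t) := div_nonneg (by linarith) hty.le
    have hab : (y - x) / (y - t) + (x - t) / (y - t) = 1 := by
      rw [← add_div, div_eq_one_iff_eq hty.ne']; ring
    have hcomb : (y - x) / (y - t) * t + (x - t) / (y - t) * y = x := by
      rw [div_mul_eq_mul_div, div_mul_eq_mul_div, ← add_div, div_eq_iff hty.ne']; ring
    have h2 := hΨconv.2 (mem_Ioi.mpr ht0) (mem_Ioi.mpr hy) ha hb hab
    simp only [smul_eq_mul] at h2
    rw [hcomb] at h2
    exact h2
  have := ge_of_tendsto htend hev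
  simpa using this

lemma psi_mono (Ψ : ℝ → ℝ) (hΨconv : ConvexOn ℝ (Set.Ioi 0) Ψ)
    (hΨpos : ∀ r > (0:ℝ), 0 < Ψ r)
    (hΨ0 : Tendsto Ψ (nhdsWithin 0 (Set.Ioi 0)) (nhds 0))
    {x y : ℝ} (hx : 0 < x) (hxy : x ≤ y) : Ψ x ≤ Ψ y := by
  have h1 := psi_scale Ψ hΨconv hΨ0 hx hxy
  have hy : 0 < y := hx.trans_le hxy
  have : x / y * Ψ y ≤ 1 * Ψ y :=
    mul_le_mul_of_nonneg_right (by rw [div_le_one hy]; exact hxy) (hΨpos y hy).le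
  linarith

/-- The frontier of a bounded interval is contained in its endpoints. -/
lemma frontier_ordConnected_subset {J : Set ℝ} (hJ : J.OrdConnected)
    (hb : Bornology.IsBounded J) : frontier J ⊆ {sInf J, sSup J} := by
  rcases J.eq_empty_or_nonempty with rfl | hne
  · simp
  obtain ⟨hbb, hba⟩ := isBounded_iff_bddBelow_bddAbove.mp hb
  intro x hx
  have h1 : x ∈ Icc (sInf J) (sSup J) :=
    (closure_minimal (fun y hy => mem_Icc.mpr ⟨csInf_le hbb hy, le_csSup hba hy⟩) isClosed_Icc) hx.1
  by_contra hne2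
  simp only [mem_insert_iff, mem_singleton_iff, not_or] at hne2
  have hlt1 : sInf J < x := lt_of_le_of_ne h1.1 (Ne.symm hne2.1)
  have hlt2 : x < sSup J := lt_of_le_of_ne h1.2 hne2.2
  have hIoo : Ioo (sInf J) (sSup J) ⊆ J := by
    intro y hy
    obtain ⟨a, haJ, hay⟩ := exists_lt_of_csInf_lt hne hy.1
    obtain ⟨b, hbJ, hyb⟩ := exists_lt_of_lt_csSup hne hy.2
    exact hJ.out haJ hbJ ⟨hay.le, hyb.le⟩
  exact hx.2 (interior_maximal hIoo isOpen_Ioo ⟨hlt1, hlt2⟩)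

/-- The supremum of a nonempty bounded set is in its frontier. -/
lemma csSup_mem_frontier {S : Set ℝ} (hne : S.Nonempty) (hba : BddAbove S) :
    sSup S ∈ frontier S := by
  refine ⟨csSup_mem_closure hne hba, fun h => ?_⟩
  rw [mem_interior_iff_mem_nhds, Metric.mem_nhds_iff] at h
  obtain ⟨ε, hε, hball⟩ := h
  have : sSup S + ε / 2 ∈ S := by
    apply hball
    simp [Real.dist_eq, abs_of_pos, hε, half_lt_self hε]
  have := le_csSup hba this
  linarith



/-- Slice formulation of the lemma that in `(0,∞) × L` with volume
density `1` and convex surface density `Ψ` vanishing at `0⁺`, vertical fibers minimize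
vertical surface area among regions of the same volume: if `R ⊆ (0,∞) × L` has
a.e. slices that are finite unions of bounded intervals and has volume `r₀ · ν L`, then
the fiberwise sum of `Ψ` over the slice boundary points `E l` integrates to at least
`Ψ r₀ · ν L`. -/
theorem stmt_4 {L : Type*} [MeasurableSpace L] (ν : Measure L) [IsFiniteMeasure ν]
    (Ψ : ℝ → ℝ) (hΨconv : ConvexOn ℝ (Set.Ioi 0) Ψ) (hΨpos : ∀ r > (0:ℝ), 0 < Ψ r)
    (hΨ0 : Tendsto Ψ (nhdsWithin 0 (Set.Ioi 0)) (nhds 0))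
    (r₀ : ℝ) (hr₀ : 0 < r₀)
    (R : Set (ℝ × L)) (hRmeas : MeasurableSet R)
    (hRsub : R ⊆ Set.Ioi (0:ℝ) ×ˢ Set.univ)
    (hslices : ∀ᵐ l ∂ν, ∃ (m : ℕ) (J : Fin m → Set ℝ),
      (∀ i, (J i).OrdConnected ∧ Bornology.IsBounded (J i)) ∧
      {r : ℝ | (r, l) ∈ R} = ⋃ i, J i)
    (hvol : (volume.prod ν) R = ENNReal.ofReal r₀ * ν Set.univ)
    (E : L → Set ℝ) (hE : ∀ l, E l = frontier {r : ℝ | (r, l) ∈ R} ∩ Set.Ioi 0)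
    (hmeas : Measurable fun l => ∑ᶠ r ∈ E l, Ψ r) :
    ENNReal.ofReal (Ψ r₀) * ν Set.univ ≤
      ∫⁻ l, ENNReal.ofReal (∑ᶠ r ∈ E l, Ψ r) ∂ν := by
  classical
  -- slice measure
  set g : L → ENNReal := fun l => volume ((fun r => (r, l)) ⁻¹' R) with hg
  have hgmeas : Measurable g := measurable_measure_prodMk_right hRmeas
  have hgint : ∫⁻ l, g l ∂ν = ENNReal.ofReal r₀ * ν Set.univ := by
    rw [← hvol, Measure.prod_apply_symm hRmeas]
  -- the supporting slope
  set c : ℝ := sSup ((fun y => (Ψ r₀ - Ψ y) / (r₀ - y)) '' Ioo 0 r₀) with hc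
  have hmem2r₀ : (2 * r₀) ∈ Ioi (0:ℝ) := by simp; linarith
  have hSne : ((fun y => (Ψ r₀ - Ψ y) / (r₀ - y)) '' Ioo 0 r₀).Nonempty :=
    ⟨_, ⟨r₀ / 2, ⟨by positivity, half_lt_self hr₀⟩, rfl⟩⟩
  have hSbdd : BddAbove ((fun y => (Ψ r₀ - Ψ y) / (r₀ - y)) '' Ioo 0 r₀) := by
    refine ⟨(Ψ (2 * r₀) - Ψ r₀) / (2 * r₀ - r₀), ?_⟩
    rintro z ⟨y, hy, rfl⟩
    exact hΨconv.slope_mono_adjacent (mem_Ioi.mpr hy.1) hmem2r₀ hy.2 (by linarith)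
  have hc_lb : Ψ r₀ / r₀ ≤ c := by
    refine le_trans ?_ (le_csSup hSbdd ⟨r₀ / 2, ⟨by positivity, half_lt_self hr₀⟩, rfl⟩)
    have hs := psi_scale Ψ hΨconv hΨ0 (show (0:ℝ) < r₀ / 2 by positivity)
      (by linarith : r₀ / 2 ≤ r₀)
    have he : r₀ / 2 / r₀ = 1 / 2 := by field_simp
    rw [he] at hs
    rw [div_le_div_iff₀ hr₀ (by linarith : (0:ℝ) < r₀ - r₀ / 2)]
    nlinarith [hΨpos r₀ hr₀]
  have hc_pos : 0 < c := lt_of_lt_of_le (div_pos (hΨpos r₀ hr₀) hr₀) hc_lb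
  have hΨcr : Ψ r₀ ≤ c * r₀ := by
    rw [div_le_iff₀ hr₀] at hc_lb; linarith
  -- supporting line
  have hsupp : ∀ x : ℝ, 0 < x → Ψ r₀ + c * (x - r₀) ≤ Ψ x := by
    intro x hx
    rcases lt_trichotomy x r₀ with h | rfl | h
    · have hle : (Ψ r₀ - Ψ x) / (r₀ - x) ≤ c :=
        le_csSup hSbdd ⟨x, ⟨hx, h⟩, rfl⟩
      rw [div_le_iff₀ (by linarith : (0:ℝ) < r₀ - x)] at hle
      nlinarith
    · simp
    · have hub : c ≤ (Ψ x - Ψ r₀) / (x - r₀) := by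
        apply csSup_le hSne
        rintro z ⟨y, hy, rfl⟩
        exact hΨconv.slope_mono_adjacent (mem_Ioi.mpr hy.1) (mem_Ioi.mpr hx) hy.2 h
      rw [le_div_iff₀ (by linarith : (0:ℝ) < x - r₀)] at hub
      nlinarith
  -- pointwise a.e. bound
  have key : ∀ᵐ l ∂ν, ENNReal.ofReal (Ψ r₀) + ENNReal.ofReal c * g l ≤
      ENNReal.ofReal (∑ᶠ r ∈ E l, Ψ r) + ENNReal.ofReal (c * r₀) := by
    filter_upwards [hslices] with l hl
    obtain ⟨m, J, hJ, hSeq⟩ := hl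
    set S : Set ℝ := {r | (r, l) ∈ R} with hSdef
    have hEl : E l = frontier S ∩ Ioi 0 := hE l
    have hglS : g l = volume S := rfl
    have hSsub : S ⊆ Ioi 0 := fun r hr => (hRsub hr).1
    have hSbddB : Bornology.IsBounded S := by
      rw [hSeq]; exact Bornology.isBounded_iUnion.mpr fun i => (hJ i).2
    have hEfin : (E l).Finite := by
      have hfr : frontier S ⊆ ⋃ i, ({sInf (J i), sSup (J i)} : Set ℝ) := by
        intro x hx
        have hxc : x ∈ ⋃ i, closure (J i) := by
          have := hx.1
          rw [hSeq, closure_iUnion_of_finite J] at this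
          exact this
        obtain ⟨_, ⟨i, rfl⟩, hxi⟩ := hxc
        have hxint : x ∉ interior (J i) := fun hint =>
          hx.2 (interior_mono (by rw [hSeq]; exact subset_iUnion J i) hint)
        exact mem_iUnion.mpr ⟨i, frontier_ordConnected_subset (hJ i).1 (hJ i).2 ⟨hxi, hxint⟩⟩
      refine Set.Finite.subset (Set.finite_iUnion
        (f := fun i : Fin m => ({sInf (J i), sSup (J i)} : Set ℝ))
        fun i => (Set.finite_singleton _).insert _) ?_
      rw [hEl]
      exact fun x hx => hfr hx.1
    have hfin_nonneg : 0 ≤ ∑ᶠ r ∈ E l, Ψ r := by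
      rw [finsum_mem_eq_finite_toFinset_sum _ hEfin]
      apply Finset.sum_nonneg
      intro r hr
      have h1 : r ∈ E l := hEfin.mem_toFinset.mp hr
      rw [hEl] at h1
      exact (hΨpos r h1.2).le
    rcases S.eq_empty_or_nonempty with hSemp | hSne'
    · have hg0 : g l = 0 := by rw [hglS, show S = ∅ from hSemp, measure_empty]
      have hE0 : E l = ∅ := by
        rw [hEl, hSemp]; simp
      rw [hg0, hE0, finsum_mem_empty, mul_zero, add_zero, ENNReal.ofReal_zero, zero_add]
      exact ENNReal.ofReal_le_ofReal hΨcr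
    · obtain ⟨hbb, hba⟩ := isBounded_iff_bddBelow_bddAbove.mp hSbddB
      set b : ℝ := sSup S with hb
      have hb_pos : (0:ℝ) < b := by
        obtain ⟨x, hxS⟩ := hSne'
        exact lt_of_lt_of_le (hSsub hxS) (le_csSup hba hxS)
      have hbE : b ∈ E l := by
        rw [hEl]
        exact ⟨csSup_mem_frontier hSne' hba, hb_pos⟩
      have hsum : Ψ b ≤ ∑ᶠ r ∈ E l, Ψ r := by
        rw [finsum_mem_eq_finite_toFinset_sum _ hEfin]
        refine Finset.single_le_sum (fun r hr => ?_) (hEfin.mem_toFinset.mpr hbE)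
        have h1 : r ∈ E l := hEfin.mem_toFinset.mp hr
        rw [hEl] at h1
        exact (hΨpos r h1.2).le
      have hvolS : volume S ≤ ENNReal.ofReal b := by
        have : S ⊆ Ioc 0 b := fun x hx => ⟨hSsub hx, le_csSup hba hx⟩
        calc volume S ≤ volume (Ioc 0 b) := measure_mono this
          _ = ENNReal.ofReal b := by rw [Real.volume_Ioc, sub_zero]
      have hgne : g l ≠ ⊤ := by
        rw [hglS]
        exact ne_top_of_le_ne_top ENNReal.ofReal_ne_top hvolS
      set mℓ : ℝ := (g l).toReal with hmℓ
      have hmℓ_nonneg : 0 ≤ mℓ := ENNReal.toReal_nonneg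
      have hmℓ_le : mℓ ≤ b := by
        rw [hmℓ, hglS]
        exact ENNReal.toReal_le_of_le_ofReal hb_pos.le hvolS
      have hreal : Ψ r₀ + c * mℓ ≤ (∑ᶠ r ∈ E l, Ψ r) + c * r₀ := by
        have hΨb : Ψ r₀ + c * (mℓ - r₀) ≤ Ψ b := by
          rcases eq_or_lt_of_le hmℓ_nonneg with h0 | h0
          · have : Ψ r₀ + c * (mℓ - r₀) ≤ 0 := by rw [← h0]; nlinarith
            exact this.trans (hΨpos b hb_pos).le
          · exact (hsupp mℓ h0).trans
              (psi_mono Ψ hΨconv hΨpos hΨ0 h0 hmℓ_le)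
        nlinarith
      calc ENNReal.ofReal (Ψ r₀) + ENNReal.ofReal c * g l
          = ENNReal.ofReal (Ψ r₀ + c * mℓ) := by
            rw [ENNReal.ofReal_add (hΨpos r₀ hr₀).le (mul_nonneg hc_pos.le hmℓ_nonneg),
              ENNReal.ofReal_mul hc_pos.le, hmℓ, ENNReal.ofReal_toReal hgne]
        _ ≤ ENNReal.ofReal ((∑ᶠ r ∈ E l, Ψ r) + c * r₀) := ENNReal.ofReal_le_ofReal hreal
        _ = ENNReal.ofReal (∑ᶠ r ∈ E l, Ψ r) + ENNReal.ofReal (c * r₀) :=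
            ENNReal.ofReal_add hfin_nonneg (mul_nonneg hc_pos.le hr₀.le)
  -- integrate
  have hKne : ENNReal.ofReal (c * r₀) * ν Set.univ ≠ ⊤ :=
    ENNReal.mul_ne_top ENNReal.ofReal_ne_top (measure_ne_top ν _)
  rw [← ENNReal.add_le_add_iff_right hKne]
  calc ENNReal.ofReal (Ψ r₀) * ν Set.univ + ENNReal.ofReal (c * r₀) * ν Set.univ
      = ∫⁻ l, (ENNReal.ofReal (Ψ r₀) + ENNReal.ofReal c * g l) ∂ν := by
        rw [lintegral_add_left measurable_const, lintegral_const,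
          lintegral_const_mul _ hgmeas, hgint, ENNReal.ofReal_mul hc_pos.le, mul_assoc]
    _ ≤ ∫⁻ l, (ENNReal.ofReal (∑ᶠ r ∈ E l, Ψ r) + ENNReal.ofReal (c * r₀)) ∂ν :=
        lintegral_mono_ae key
    _ = (∫⁻ l, ENNReal.ofReal (∑ᶠ r ∈ E l, Ψ r) ∂ν) + ENNReal.ofReal (c * r₀) * ν Set.univ := by
        rw [lintegral_add_right _ measurable_const, lintegral_const]
end

section
/- Let c > 0, V₁ > 0, and let F : (0,∞) → ℝ satisfy: F(V) ≥ cV for all V > 0; F is convex and differentiable on (V₁, ∞); and F′(V) → ∞ as V → ∞. Then there exist V₀ ≥ V₁ and a convex function F̃ : (0,∞) → ℝ such that F̃(V) ≤ F(V) for all V > 0, F̃(V) = F(V) for all V ≥ V₀, and lim_{V→0⁺} F̃(V) = 0. -/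
open Filter Set

/-- Three-point lemma: if slope x y ≤ slope y z, then slope x y ≤ slope x z and
slope x z ≤ slope y z. -/
private lemma slope_three_point {x y z fx fy fz : ℝ} (hxy : x < y) (hyz : y < z)
    (h : (fy - fx) / (y - x) ≤ (fz - fy) / (z - y)) :
    (fy - fx) / (y - x) ≤ (fz - fx) / (z - x) ∧
      (fz - fx) / (z - x) ≤ (fz - fy) / (z - y) := by
  have h1 : (0:ℝ) < y - x := by linarith
  have h2 : (0:ℝ) < z - y := by linarith
  have h3 : (0:ℝ) < z - x := by linarith
  rw [div_le_div_iff₀ h1 h2] at h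
  constructor
  · rw [div_le_div_iff₀ h1 h3]; nlinarith
  · rw [div_le_div_iff₀ h3 h2]; nlinarith

/-- If `F : (0,∞) → ℝ` satisfies `F V ≥ c V`, is convex and
differentiable on `(V₁,∞)`, and `F' → ∞` at infinity, then there is `V₀ ≥ V₁` and a
convex minorant `F̃` of `F` on `(0,∞)` with `F̃ = F` on `[V₀,∞)` and `F̃ → 0` at `0⁺`. -/
theorem stmt_6 (c V₁ : ℝ) (hc : 0 < c) (hV₁ : 0 < V₁) (F : ℝ → ℝ)
    (hgrowth : ∀ V > (0:ℝ), c * V ≤ F V)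
    (hconv : ConvexOn ℝ (Set.Ioi V₁) F)
    (hdiff : DifferentiableOn ℝ F (Set.Ioi V₁))
    (hderiv : Tendsto (deriv F) atTop atTop) :
    ∃ (V₀ : ℝ) (Ft : ℝ → ℝ), V₁ ≤ V₀ ∧
      ConvexOn ℝ (Set.Ioi 0) Ft ∧
      (∀ V > (0:ℝ), Ft V ≤ F V) ∧
      (∀ V ≥ V₀, Ft V = F V) ∧
      Tendsto Ft (nhdsWithin 0 (Set.Ioi 0)) (nhds 0) := by
  set a : ℝ := V₁ + 1 with ha_def
  have haV₁ : V₁ < a := by simp [ha_def]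
  -- choose V₀ with large derivative
  obtain ⟨V₀, hm_big, hV₀a⟩ :=
    ((hderiv.eventually_ge_atTop (max c (F a - c * V₁))).and (eventually_gt_atTop a)).exists
  set m : ℝ := deriv F V₀ with hm_def
  have hV₁V₀ : V₁ < V₀ := haV₁.trans hV₀a
  have hV₀pos : 0 < V₀ := hV₁.trans hV₁V₀
  have hmc : c ≤ m := le_trans (le_max_left _ _) hm_big
  have hmF : F a - c * V₁ ≤ m := le_trans (le_max_right _ _) hm_big
  have hmpos : 0 < m := lt_of_lt_of_le hc hmc
  -- the tangent line at V₀
  set L : ℝ → ℝ := fun V => F V₀ + m * (V - V₀) with hL_def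
  have hdiffV₀ : DifferentiableAt ℝ F V₀ :=
    (hdiff V₀ hV₁V₀).differentiableAt (Ioi_mem_nhds hV₁V₀)
  -- tangent line is below F on (V₁, ∞)
  have htangent : ∀ V ∈ Ioi V₁, L V ≤ F V := by
    intro V hV
    rcases lt_trichotomy V V₀ with h | h | h
    · have := hconv.slope_le_deriv hV (mem_Ioi.mpr hV₁V₀) h hdiffV₀
      rw [slope_def_field, div_le_iff₀ (by linarith)] at this
      simp only [hL_def]; linarith
    · simp [hL_def, h]
    · have := hconv.deriv_le_slope (mem_Ioi.mpr hV₁V₀) hV h hdiffV₀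
      rw [slope_def_field, le_div_iff₀ (by linarith)] at this
      simp only [hL_def]; linarith
  -- slope from a to V₀ is at most m, hence L V₁ ≤ c V₁
  have hslope_a : F V₀ - F a ≤ m * (V₀ - a) := by
    have := hconv.slope_le_deriv (mem_Ioi.mpr haV₁) (mem_Ioi.mpr hV₁V₀) hV₀a hdiffV₀
    rw [slope_def_field, div_le_iff₀ (by linarith)] at this
    linarith
  have hLV₁ : L V₁ ≤ c * V₁ := by
    simp only [hL_def]
    have : a - V₁ = 1 := by simp [ha_def]
    nlinarith
  -- L ≤ c • id on (0, V₁]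
  have hLc : ∀ V ≤ V₁, L V ≤ c * V := by
    intro V hV
    simp only [hL_def] at hLV₁ ⊢
    nlinarith
  -- the piecewise function
  set G : ℝ → ℝ := fun V => max (c * V) (L V) with hG_def
  refine ⟨V₀, fun V => if V₀ ≤ V then F V else G V, hV₁V₀.le, ?_, ?_, ?_, ?_⟩
  · -- convexity
    set Ft : ℝ → ℝ := fun V => if V₀ ≤ V then F V else G V with hFt_def
    have hGconv : ConvexOn ℝ (univ : Set ℝ) G := by
      refine ConvexOn.sup ⟨convex_univ, ?_⟩ ⟨convex_univ, ?_⟩ <;>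
      · intro x _ y _ p q hp hq hpq
        apply le_of_eq
        simp only [smul_eq_mul, hL_def]
        have hq' : q = 1 - p := by linarith
        subst hq'
        ring
    have hGV₀ : G V₀ = F V₀ := by
      simp only [hG_def, hL_def]
      simp [max_eq_right (hgrowth V₀ hV₀pos)]
    have hFtG : ∀ V ≤ V₀, Ft V = G V := by
      intro V hV
      rcases eq_or_lt_of_le hV with rfl | hlt
      · simp [hFt_def, hGV₀]
      · simp [hFt_def, not_le.mpr hlt]
    have hFtF : ∀ V, V₀ ≤ V → Ft V = F V := fun V hV => by simp [hFt_def, hV]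
    -- key slope bound: slope of G up to V₀ is at most m
    have hGslope : ∀ y < V₀, (G V₀ - G y) / (V₀ - y) ≤ m := by
      intro y hy
      rw [div_le_iff₀ (by linarith)]
      have h1 : L y ≤ G y := le_max_right _ _
      have h2 : G V₀ = L V₀ := by simp [hGV₀, hL_def]
      simp only [hL_def] at h1 h2 ⊢
      nlinarith
    -- key slope bound: slope of F from V₀ is at least m
    have hFslope : ∀ z, V₀ < z → m ≤ (F z - F V₀) / (z - V₀) := by
      intro z hz
      have := hconv.deriv_le_slope (mem_Ioi.mpr hV₁V₀) (mem_Ioi.mpr (hV₁V₀.trans hz)) hz hdiffV₀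
      rwa [slope_def_field] at this
    apply convexOn_of_slope_mono_adjacent (convex_Ioi 0)
    intro x y z hx hz hxy hyz
    have hy : y ∈ Ioi (0:ℝ) := lt_trans hx hxy
    rcases le_or_gt z V₀ with hzV₀ | hzV₀
    · -- all points ≤ V₀ : use convexity of G
      rw [hFtG x (by linarith), hFtG y (by linarith), hFtG z hzV₀]
      exact hGconv.slope_mono_adjacent (mem_univ x) (mem_univ z) hxy hyz
    rcases le_or_gt V₀ x with hxV₀ | hxV₀
    · -- all points ≥ V₀ : use convexity of F
      rw [hFtF x hxV₀, hFtF y (by linarith), hFtF z (by linarith)]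
      exact hconv.slope_mono_adjacent (mem_Ioi.mpr (lt_of_lt_of_le hV₁V₀ hxV₀))
        (mem_Ioi.mpr (by linarith)) hxy hyz
    -- mixed case: x < V₀ < z
    rcases le_or_gt y V₀ with hyV₀ | hyV₀
    · -- x < y ≤ V₀ < z
      rcases eq_or_lt_of_le hyV₀ with rfl | hyV₀'
      · -- y = V₀
        rw [hFtG x hxV₀.le, hFtF y le_rfl, hFtF z hzV₀.le, ← hGV₀]
        exact le_trans (hGslope x hxV₀) (by rw [hGV₀]; exact hFslope z hzV₀)
      · rw [hFtG x hxV₀.le, hFtG y hyV₀, hFtF z hzV₀.le]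
        have h1 : (G y - G x) / (y - x) ≤ (G V₀ - G y) / (V₀ - y) :=
          hGconv.slope_mono_adjacent (mem_univ x) (mem_univ V₀) hxy hyV₀'
        have h2 : (G V₀ - G y) / (V₀ - y) ≤ (F z - G V₀) / (z - V₀) :=
          le_trans (hGslope y hyV₀') (by rw [hGV₀]; exact hFslope z hzV₀)
        have h3 := (slope_three_point hyV₀' hzV₀ h2).1
        exact le_trans h1 (by rw [hGV₀] at h3 ⊢; exact h3)
    · -- x < V₀ < y < z
      rw [hFtG x hxV₀.le, hFtF y hyV₀.le, hFtF z (by linarith)]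
      have h1 : (G V₀ - G x) / (V₀ - x) ≤ (F y - G V₀) / (y - V₀) :=
        le_trans (hGslope x hxV₀) (by rw [hGV₀]; exact hFslope y hyV₀)
      have h2 : (F y - G x) / (y - x) ≤ (F y - G V₀) / (y - V₀) := by
        have := (slope_three_point hxV₀ hyV₀ h1).2
        rwa [hGV₀] at this ⊢
      refine le_trans h2 ?_
      rw [hGV₀]
      exact hconv.slope_mono_adjacent (mem_Ioi.mpr hV₁V₀)
        (mem_Ioi.mpr (by linarith)) hyV₀ hyz
  · -- minorant
    intro V hV
    rcases le_or_gt V₀ V with h | h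
    · simp [h]
    · simp only [not_le.mpr h, if_false, hG_def]
      apply max_le (hgrowth V hV)
      rcases le_or_gt V V₁ with h' | h'
      · exact le_trans (hLc V h') (hgrowth V hV)
      · exact htangent V (mem_Ioi.mpr h')
  · -- equality on [V₀, ∞)
    intro V hV; simp [hV]
  · -- limit at 0⁺
    have hev : ∀ᶠ V in nhdsWithin 0 (Ioi 0),
        (if V₀ ≤ V then F V else G V) = c * V := by
      filter_upwards [Ioo_mem_nhdsGT_of_mem (by constructor <;> simp [hV₁] : (0:ℝ) ∈ Ico 0 V₁)]
        with V hV
      rw [if_neg (by push_neg; exact hV.2.trans hV₁V₀), hG_def]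
      exact max_eq_left (hLc V hV.2.le)
    have key : Tendsto (fun V : ℝ => c * V) (nhds 0) (nhds 0) := by
      simpa using (continuous_mul_left c).tendsto (0:ℝ)
    exact Tendsto.congr' (hev.mono fun V h => h.symm)
      (key.mono_left nhdsWithin_le_nhds)
end

section
/- Let n ≥ 2 and let φ : [0,∞) → ℝ be continuous, and suppose there exist r₀ > 0 and ε > 0 such that φ is twice continuously differentiable on (r₀, ∞) with φ″(r) ≥ ε/r for all r > r₀. Define V(r) = ∫₀^r t^{n−1} e^{φ(t)} dt and S(r) = r^{n−1} e^{φ(r)}, and let F = S ∘ V^{−1} on (0, lim_{r→∞} V(r)). Then: (i) V(r) → ∞ as r → ∞, so F is defined on all of (0,∞); (ii) there exists V₁ > 0 such that F is convex on (V₁, ∞); (iii) F′(V) → ∞ as V → ∞; and (iv) there exists c > 0 such that F(V) ≥ cV for all V > 0. -/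
open MeasureTheory Filter Set

/-- In `ℝⁿ` with radial simple density `e^{φ(r)}`, `φ` continuous on
`[0,∞)` and twice continuously differentiable on `(r₀,∞)` with `φ'' ≥ ε/r` there, the
function `F` sending ball volume `V(r) = ∫₀^r t^{n-1}e^{φ(t)} dt` to sphere area
`S(r) = r^{n-1}e^{φ(r)}` satisfies: (i) `V → ∞`; (ii) `F` is eventually convex;
(iii) `F' → ∞`; (iv) `F` is bounded below by a line through the origin of positive
slope. -/
theorem stmt_7 (n : ℕ) (hn : 2 ≤ n) (φ φ' φ'' : ℝ → ℝ)
    (hφc : ContinuousOn φ (Set.Ici 0))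
    (r₀ ε : ℝ) (hr₀ : 0 < r₀) (hε : 0 < ε)
    (hφ' : ∀ r > r₀, HasDerivAt φ (φ' r) r)
    (hφ'' : ∀ r > r₀, HasDerivAt φ' (φ'' r) r)
    (hφ''c : ContinuousOn φ'' (Set.Ioi r₀))
    (hφ''lb : ∀ r > r₀, ε / r ≤ φ'' r)
    (V S F : ℝ → ℝ)
    (hV : ∀ r : ℝ, V r = ∫ t in (0:ℝ)..r, t ^ (n - 1) * Real.exp (φ t))
    (hS : ∀ r : ℝ, S r = r ^ (n - 1) * Real.exp (φ r))
    (hF : ∀ r > (0:ℝ), F (V r) = S r) :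
    Tendsto V atTop atTop ∧
    (∃ V₁ > (0:ℝ), ConvexOn ℝ (Set.Ioi V₁) F) ∧
    Tendsto (deriv F) atTop atTop ∧
    (∃ c > (0:ℝ), ∀ v > (0:ℝ), c * v ≤ F v) := by
  set k := n - 1 with hk
  have hk1 : 1 ≤ k := by omega
  have hkn : k + 1 = n := by omega
  -- `S` is the integrand of `V`
  have hScont : ContinuousOn S (Set.Ici 0) := by
    have : ContinuousOn (fun t : ℝ => t ^ k * Real.exp (φ t)) (Set.Ici 0) :=
      (continuous_pow k).continuousOn.mul (Real.continuous_exp.comp_continuousOn hφc)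
    exact this.congr fun t _ => hS t
  have hSpos : ∀ t : ℝ, 0 < t → 0 < S t := by
    intro t ht
    rw [hS]
    exact mul_pos (pow_pos ht k) (Real.exp_pos _)
  have hSnonneg : ∀ t : ℝ, 0 ≤ t → 0 ≤ S t := by
    intro t ht
    rcases eq_or_lt_of_le ht with h | h
    · rw [hS, ← h, zero_pow (by omega : k ≠ 0), zero_mul]
    · exact (hSpos t h).le
  have hSint : ∀ a b : ℝ, 0 ≤ a → 0 ≤ b → IntervalIntegrable S volume a b := by
    intro a b ha hb
    apply ContinuousOn.intervalIntegrable
    exact hScont.mono fun x hx => le_trans (le_min ha hb) hx.1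
  -- rewrite V in terms of S
  have hVS : ∀ r : ℝ, V r = ∫ t in (0:ℝ)..r, S t := by
    intro r
    rw [hV]
    exact (intervalIntegral.integral_congr fun t _ => (hS t).symm)
  have hV0 : V 0 = 0 := by rw [hVS]; simp
  have hVsub : ∀ a b : ℝ, 0 ≤ a → 0 ≤ b → V b - V a = ∫ t in a..b, S t := by
    intro a b ha hb
    rw [hVS, hVS]
    exact intervalIntegral.integral_interval_sub_left (hSint 0 b le_rfl hb)
      (hSint 0 a le_rfl ha)
  have hVmono : StrictMonoOn V (Set.Ici 0) := by
    intro a ha b hb hab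
    have hpos : 0 < ∫ t in a..b, S t := by
      apply intervalIntegral.intervalIntegral_pos_of_pos_on (hSint a b ha hb) _ hab
      intro x hx
      exact hSpos x (lt_of_le_of_lt ha hx.1)
    have := hVsub a b ha hb
    linarith
  have hVd : ∀ r : ℝ, 0 < r → HasDerivAt V (S r) r := by
    intro r hr
    have h1 : HasDerivAt (fun u => ∫ t in (0:ℝ)..u, S t) (S r) r := by
      apply intervalIntegral.integral_hasDerivAt_right (hSint 0 r le_rfl hr.le)
      · exact (hScont.mono Ioi_subset_Ici_self).stronglyMeasurableAtFilter isOpen_Ioi r hr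
      · exact (hScont.mono Ioi_subset_Ici_self).continuousAt (isOpen_Ioi.mem_nhds hr)
    have : (fun u => ∫ t in (0:ℝ)..u, S t) = V := funext fun r => (hVS r).symm
    rwa [this] at h1
  -- continuity of φ'
  have hφ'c : ContinuousOn φ' (Set.Ioi r₀) := fun r hr =>
    ((hφ'' r hr).continuousAt).continuousWithinAt
  have hφ'int : ∀ a b : ℝ, r₀ < a → r₀ < b → IntervalIntegrable φ' volume a b := by
    intro a b ha hb
    apply ContinuousOn.intervalIntegrable
    exact hφ'c.mono fun x hx => lt_of_lt_of_le (lt_min ha hb) hx.1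
  have hφ''int : ∀ a b : ℝ, r₀ < a → r₀ < b → IntervalIntegrable φ'' volume a b := by
    intro a b ha hb
    apply ContinuousOn.intervalIntegrable
    exact hφ''c.mono fun x hx => lt_of_lt_of_le (lt_min ha hb) hx.1
  have hφeq : ∀ a b : ℝ, r₀ < a → a ≤ b → φ b - φ a = ∫ t in a..b, φ' t := by
    intro a b ha hab
    refine (intervalIntegral.integral_eq_sub_of_hasDerivAt (fun x hx => ?_)
      (hφ'int a b ha (lt_of_lt_of_le ha hab))).symm
    rw [uIcc_of_le hab] at hx
    exact hφ' x (lt_of_lt_of_le ha hx.1)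
  have hφ'eq : ∀ a b : ℝ, r₀ < a → a ≤ b → φ' b - φ' a = ∫ t in a..b, φ'' t := by
    intro a b ha hab
    refine (intervalIntegral.integral_eq_sub_of_hasDerivAt (fun x hx => ?_)
      (hφ''int a b ha (lt_of_lt_of_le ha hab))).symm
    rw [uIcc_of_le hab] at hx
    exact hφ'' x (lt_of_lt_of_le ha hx.1)
  set s₀ := r₀ + 1 with hs₀
  have hs₀r₀ : r₀ < s₀ := by linarith
  have hs₀pos : 0 < s₀ := by linarith
  -- logarithmic lower bound for φ'
  have L1 : ∀ r : ℝ, s₀ ≤ r → φ' s₀ + ε * (Real.log r - Real.log s₀) ≤ φ' r := by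
    intro r hr
    have hrpos : 0 < r := lt_of_lt_of_le hs₀pos hr
    have h1 : (∫ t in s₀..r, ε * t⁻¹) ≤ ∫ t in s₀..r, φ'' t := by
      apply intervalIntegral.integral_mono_on hr
      · apply ContinuousOn.intervalIntegrable
        apply continuousOn_const.mul
        intro x hx
        have hx0 : 0 < x := lt_of_lt_of_le (lt_min hs₀pos hrpos) hx.1
        exact (continuousAt_inv₀ hx0.ne').continuousWithinAt
      · exact hφ''int s₀ r hs₀r₀ (lt_of_lt_of_le hs₀r₀ hr)
      · intro x hx
        have hx0 : r₀ < x := lt_of_lt_of_le hs₀r₀ hx.1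
        have := hφ''lb x hx0
        rwa [div_eq_mul_inv] at this
    have h2 : (∫ t in s₀..r, ε * t⁻¹) = ε * (Real.log r - Real.log s₀) := by
      rw [intervalIntegral.integral_const_mul, integral_inv_of_pos hs₀pos hrpos,
        Real.log_div hrpos.ne' hs₀pos.ne']
    have h3 := hφ'eq s₀ r hs₀r₀ hr
    linarith [h1, h2.symm.le, h2.le]
  have hφ'top : Tendsto φ' atTop atTop := by
    apply tendsto_atTop_mono' atTop (eventually_atTop.2 ⟨s₀, L1⟩)
    apply tendsto_atTop_add_const_left
    apply Tendsto.const_mul_atTop hε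
    exact tendsto_atTop_add_const_right _ _ Real.tendsto_log_atTop
  -- a point beyond which φ' ≥ 1
  obtain ⟨R', hR'⟩ := eventually_atTop.1 (hφ'top.eventually_ge_atTop 1)
  set R₂ : ℝ := max R' (max s₀ 1) with hR₂def
  have hR₂s₀ : s₀ ≤ R₂ := le_trans (le_max_left _ _) (le_max_right _ _)
  have hR₂1 : (1:ℝ) ≤ R₂ := le_trans (le_max_right _ _) (le_max_right _ _)
  have hR₂r₀ : r₀ < R₂ := lt_of_lt_of_le hs₀r₀ hR₂s₀
  have hR₂pos : 0 < R₂ := lt_of_lt_of_le (by linarith) hR₂1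
  have hφ'R₂ : ∀ r : ℝ, R₂ ≤ r → 1 ≤ φ' r := fun r hr =>
    hR' r (le_trans (le_max_left _ _) hr)
  -- φ is monotone past R₂
  have hφmono : ∀ r : ℝ, R₂ ≤ r → φ R₂ ≤ φ r := by
    intro r hr
    have h1 := hφeq R₂ r hR₂r₀ hr
    have h2 : (0:ℝ) ≤ ∫ t in R₂..r, φ' t := by
      apply intervalIntegral.integral_nonneg hr
      intro u hu
      linarith [hφ'R₂ u hu.1]
    linarith
  -- (i) V → ∞
  have hVlow : ∀ r : ℝ, R₂ ≤ r → V R₂ + (r - R₂) * Real.exp (φ R₂) ≤ V r := by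
    intro r hr
    have h1 : (∫ t in R₂..r, Real.exp (φ R₂)) ≤ ∫ t in R₂..r, S t := by
      apply intervalIntegral.integral_mono_on hr intervalIntegrable_const
        (hSint R₂ r hR₂pos.le (by linarith))
      intro x hx
      rw [hS]
      have hx1 : (1:ℝ) ≤ x := le_trans hR₂1 hx.1
      calc Real.exp (φ R₂) = 1 * Real.exp (φ R₂) := (one_mul _).symm
        _ ≤ x ^ k * Real.exp (φ x) := by
            apply mul_le_mul (one_le_pow₀ hx1) (Real.exp_le_exp.2 (hφmono x hx.1))
              (Real.exp_pos _).le (pow_nonneg (by linarith) k)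
    have h2 : (∫ t in R₂..r, Real.exp (φ R₂)) = (r - R₂) * Real.exp (φ R₂) := by
      simp [intervalIntegral.integral_const, smul_eq_mul]
    have h3 := hVsub R₂ r hR₂pos.le (by linarith)
    linarith
  have hVtop : Tendsto V atTop atTop := by
    apply tendsto_atTop_mono' atTop (eventually_atTop.2 ⟨R₂, hVlow⟩)
    apply tendsto_atTop_add_const_left
    apply Tendsto.atTop_mul_const (Real.exp_pos _)
    exact tendsto_atTop_add_const_right _ _ tendsto_id
  -- V is surjective onto (0, ∞)
  have hsurj : ∀ v : ℝ, ∃ r : ℝ, 0 < v → 0 < r ∧ V r = v := by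
    intro v
    by_cases hv : 0 < v
    · obtain ⟨b, hb⟩ := eventually_atTop.1 (hVtop.eventually_ge_atTop v)
      set b₁ := max b 0 with hb₁
      have hVb₁ : v ≤ V b₁ := hb b₁ (le_max_left _ _)
      have hb₁0 : (0:ℝ) ≤ b₁ := le_max_right _ _
      have hVcont : ContinuousOn V (Set.Icc 0 b₁) := by
        have h1 : ContinuousOn (fun x => ∫ t in (0:ℝ)..x, S t) (Set.uIcc 0 b₁) :=
          intervalIntegral.continuousOn_primitive_interval (by
            apply ContinuousOn.integrableOn_compact isCompact_uIcc
            exact hScont.mono fun x hx => by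
              rw [uIcc_of_le hb₁0] at hx; exact hx.1)
        rw [uIcc_of_le hb₁0] at h1
        exact h1.congr fun x _ => hVS x
      have := intermediate_value_Icc hb₁0 hVcont
      have hvmem : v ∈ Set.Icc (V 0) (V b₁) := by
        rw [hV0]; exact ⟨hv.le, hVb₁⟩
      obtain ⟨r, hr, hrv⟩ := this hvmem
      refine ⟨r, fun _ => ⟨?_, hrv⟩⟩
      rcases eq_or_lt_of_le hr.1 with h | h
      · exfalso; rw [← h, hV0] at hrv; linarith
      · exact h
    · exact ⟨1, fun h => absurd h hv⟩
  choose W hW using hsurj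
  have hWpos : ∀ v : ℝ, 0 < v → 0 < W v := fun v hv => (hW v hv).1
  have hWV : ∀ v : ℝ, 0 < v → V (W v) = v := fun v hv => (hW v hv).2
  -- W increasing: comparison lemma
  have hWgt : ∀ v : ℝ, 0 < v → ∀ b : ℝ, 0 ≤ b → V b < v → b < W v := by
    intro v hv b hb hVb
    by_contra h
    push_neg at h
    have := hVmono.monotoneOn (mem_Ici.2 (hWpos v hv).le) (mem_Ici.2 hb) h
    rw [hWV v hv] at this
    linarith
  have hWlt : ∀ v : ℝ, 0 < v → ∀ b : ℝ, 0 ≤ b → v < V b → W v < b := by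
    intro v hv b hb hVb
    by_contra h
    push_neg at h
    have := hVmono.monotoneOn (mem_Ici.2 hb) (mem_Ici.2 (hWpos v hv).le) h
    rw [hWV v hv] at this
    linarith
  -- continuity of W
  have hWcont : ∀ v : ℝ, 0 < v → Tendsto W (nhds v) (nhds (W v)) := by
    intro v hv
    rw [tendsto_order]
    constructor
    · intro a' ha'
      set a := max a' 0 with hadef
      have haW : a < W v := max_lt ha' (hWpos v hv)
      have h1 : V a < v := by
        rw [← hWV v hv]
        exact hVmono (mem_Ici.2 (le_max_right _ _)) (mem_Ici.2 (hWpos v hv).le) haW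
      filter_upwards [isOpen_Ioi.mem_nhds (show V a < v from h1),
        isOpen_Ioi.mem_nhds hv] with x hx hx0
      exact lt_of_le_of_lt (le_max_left a' 0) (hWgt x hx0 a (le_max_right _ _) hx)
    · intro b' hb'
      have hb'0 : 0 ≤ b' := le_of_lt (lt_trans (hWpos v hv) hb')
      have h1 : v < V b' := by
        rw [← hWV v hv]
        exact hVmono (mem_Ici.2 (hWpos v hv).le) (mem_Ici.2 hb'0) hb'
      filter_upwards [isOpen_Iio.mem_nhds (show v < V b' from h1),
        isOpen_Ioi.mem_nhds hv] with x hx hx0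
      exact hWlt x hx0 b' hb'0 hx
  -- the derivative of S
  set G : ℝ → ℝ := fun r => (k : ℝ) * r⁻¹ + φ' r with hGdef
  have hSd : ∀ r : ℝ, r₀ < r → HasDerivAt S (S r * G r) r := by
    intro r hr
    have hrpos : 0 < r := lt_trans hr₀ hr
    have h1 : HasDerivAt (fun x : ℝ => x ^ k * Real.exp (φ x))
        ((k : ℝ) * r ^ (k - 1) * Real.exp (φ r) + r ^ k * (Real.exp (φ r) * φ' r)) r := by
      exact (hasDerivAt_pow k r).mul ((Real.hasDerivAt_exp (φ r)).comp r (hφ' r hr))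
    have h2 : (fun x : ℝ => x ^ k * Real.exp (φ x)) = S := funext fun x => (hS x).symm
    rw [h2] at h1
    convert h1 using 1
    have hrk : r ^ k * r⁻¹ = r ^ (k - 1) := by
      rw [show r ^ k = r ^ (k - 1) * r by rw [← pow_succ]; congr 1; omega,
        mul_assoc, mul_inv_cancel₀ hrpos.ne', mul_one]
    calc S r * G r
        = (k : ℝ) * (r ^ k * r⁻¹) * Real.exp (φ r) + r ^ k * (Real.exp (φ r) * φ' r) := by
          rw [hS, hGdef]; ring
      _ = (k : ℝ) * r ^ (k - 1) * Real.exp (φ r) + r ^ k * (Real.exp (φ r) * φ' r) := by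
          rw [hrk]
  -- continuity of G on Ioi r₀
  have hGc : ContinuousOn G (Set.Ioi r₀) := by
    apply ContinuousOn.add _ hφ'c
    apply ContinuousOn.mul continuousOn_const
    apply continuousOn_inv₀.mono
    intro x hx
    exact (lt_trans hr₀ hx).ne'
  -- derivative of G
  have hGd : ∀ r : ℝ, r₀ < r → HasDerivAt G ((k : ℝ) * (-(r ^ 2)⁻¹) + φ'' r) r := by
    intro r hr
    have hrne : r ≠ 0 := (lt_trans hr₀ hr).ne'
    exact ((hasDerivAt_inv hrne).const_mul (k : ℝ)).add (hφ'' r hr)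
  -- r₁ : threshold for convexity
  set r₁ : ℝ := max R₂ ((n : ℝ) / ε) with hr₁def
  have hr₁R₂ : R₂ ≤ r₁ := le_max_left _ _
  have hr₁r₀ : r₀ < r₁ := lt_of_lt_of_le hR₂r₀ hr₁R₂
  have hr₁pos : 0 < r₁ := lt_of_lt_of_le hR₂pos hr₁R₂
  -- G is monotone on Ici r₁
  have hkcast : (k : ℝ) < n := by
    have : k < n := by omega
    exact_mod_cast this
  have hGmono : MonotoneOn G (Set.Ici r₁) := by
    apply StrictMonoOn.monotoneOn
    apply strictMonoOn_of_deriv_pos (convex_Ici r₁)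
    · intro x hx
      exact ((hGd x (lt_of_lt_of_le hr₁r₀ hx)).continuousAt).continuousWithinAt
    · intro x hx
      rw [interior_Ici] at hx
      have hxr₀ : r₀ < x := lt_trans hr₁r₀ hx
      have hxpos : 0 < x := lt_trans hr₁pos hx
      rw [(hGd x hxr₀).deriv]
      have h1 := hφ''lb x hxr₀
      have h2 : (n : ℝ) / ε < x := lt_of_le_of_lt (le_max_right R₂ _) hx
      have h3 : (n : ℝ) < x * ε := by
        rwa [div_lt_iff₀ hε] at h2
      have h4 : (k : ℝ) / x ^ 2 < ε / x := by
        rw [div_lt_div_iff₀ (by positivity) hxpos]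
        nlinarith
      have h5 : (k : ℝ) * (-(x ^ 2)⁻¹) = -((k : ℝ) / x ^ 2) := by
        field_simp
      rw [h5]
      linarith
  set V₁ : ℝ := V r₁ with hV₁def
  have hV₁pos : 0 < V₁ := by
    rw [hV₁def, ← hV0]
    exact hVmono (mem_Ici.2 le_rfl) (mem_Ici.2 hr₁pos.le) hr₁pos
  -- key: derivative of F
  have hFd : ∀ v : ℝ, V₁ < v → HasDerivAt F (G (W v)) v := by
    intro v hv
    have hv0 : 0 < v := lt_trans hV₁pos hv
    have hWr₁ : r₁ < W v := hWgt v hv0 r₁ hr₁pos.le hv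
    have hWr₀ : r₀ < W v := lt_trans hr₁r₀ hWr₁
    have hWvpos : 0 < W v := hWpos v hv0
    have hSWpos : 0 < S (W v) := hSpos _ hWvpos
    have hWd : HasDerivAt W (S (W v))⁻¹ v := by
      apply HasDerivAt.of_local_left_inverse (hWcont v hv0) (hVd (W v) hWvpos) hSWpos.ne'
      filter_upwards [isOpen_Ioi.mem_nhds hv0] with x hx
      exact hWV x hx
    have hcomp : HasDerivAt (fun x => S (W x)) (S (W v) * G (W v) * (S (W v))⁻¹) v :=
      (hSd (W v) hWr₀).comp v hWd
    have hval : S (W v) * G (W v) * (S (W v))⁻¹ = G (W v) := by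
      field_simp
    rw [hval] at hcomp
    have hEq : F =ᶠ[nhds v] fun x => S (W x) := by
      filter_upwards [isOpen_Ioi.mem_nhds hv0] with x hx
      calc F x = F (V (W x)) := by rw [hWV x hx]
        _ = S (W x) := hF (W x) (hWpos x hx)
    exact hEq.hasDerivAt_iff.2 hcomp
  -- W is monotone on values above V₁
  have hWmono : ∀ v v' : ℝ, 0 < v → v ≤ v' → W v ≤ W v' := by
    intro v v' hv hvv'
    have hv' : 0 < v' := lt_of_lt_of_le hv hvv'
    by_contra h
    push_neg at h
    have := hVmono.monotoneOn (mem_Ici.2 (hWpos v' hv').le) (mem_Ici.2 (hWpos v hv).le) h.le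
    rw [hWV v hv, hWV v' hv'] at this
    have : v = v' := le_antisymm hvv' this
    rw [this] at h
    exact lt_irrefl _ h
  -- (ii) convexity
  have hconv : ConvexOn ℝ (Set.Ioi V₁) F := by
    apply MonotoneOn.convexOn_of_deriv (convex_Ioi V₁)
    · intro v hv
      exact ((hFd v hv).differentiableAt).continuousAt.continuousWithinAt
    · rw [interior_Ioi]
      intro v hv
      exact ((hFd v hv).differentiableAt).differentiableWithinAt
    · rw [interior_Ioi]
      intro v hv v' hv' hvv'
      rw [(hFd v hv).deriv, (hFd v' hv').deriv]
      have h1 : r₁ < W v := hWgt v (lt_trans hV₁pos hv) r₁ hr₁pos.le hv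
      have h2 : r₁ < W v' := hWgt v' (lt_trans hV₁pos hv') r₁ hr₁pos.le hv'
      exact hGmono (mem_Ici.2 h1.le) (mem_Ici.2 h2.le)
        (hWmono v v' (lt_trans hV₁pos hv) hvv')
  -- (iii) deriv F → ∞
  have hWtop : Tendsto W atTop atTop := by
    rw [tendsto_atTop]
    intro b
    filter_upwards [eventually_gt_atTop (V (max b 0)), eventually_gt_atTop 0] with v hv hv0
    have := hWgt v hv0 (max b 0) (le_max_right _ _) hv
    exact le_of_lt (lt_of_le_of_lt (le_max_left b 0) this)
  have hGtop : Tendsto G atTop atTop := by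
    apply tendsto_atTop_mono' atTop _ hφ'top
    filter_upwards [eventually_gt_atTop 0] with r hr
    rw [hGdef]
    have : 0 ≤ (k : ℝ) * r⁻¹ := by positivity
    linarith
  have hderivtop : Tendsto (deriv F) atTop atTop := by
    apply Tendsto.congr' _ (hGtop.comp hWtop)
    filter_upwards [eventually_gt_atTop V₁] with v hv
    exact ((hFd v hv).deriv).symm ▸ rfl
  -- (iv) linear lower bound
  have hlin : ∃ c > (0:ℝ), ∀ v > (0:ℝ), c * v ≤ F v := by
    -- bounds for φ on [0, R₂]
    obtain ⟨lo, _, hlo'⟩ := isCompact_Icc.exists_isMinOn (α := ℝ)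
      (Set.nonempty_Icc.2 hR₂pos.le) (hφc.mono (fun x (hx : x ∈ Icc (0:ℝ) R₂) => hx.1))
    obtain ⟨hi, _, hhi'⟩ := isCompact_Icc.exists_isMaxOn (α := ℝ)
      (Set.nonempty_Icc.2 hR₂pos.le) (hφc.mono (fun x (hx : x ∈ Icc (0:ℝ) R₂) => hx.1))
    have hlo : ∀ x ∈ Set.Icc (0:ℝ) R₂, φ lo ≤ φ x := fun x hx => isMinOn_iff.1 hlo' x hx
    have hhi : ∀ x ∈ Set.Icc (0:ℝ) R₂, φ x ≤ φ hi := fun x hx => isMaxOn_iff.1 hhi' x hx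
    set m : ℝ := Real.exp (φ lo) with hmdef
    set M : ℝ := Real.exp (φ hi) with hMdef
    have hmpos : 0 < m := Real.exp_pos _
    have hMpos : 0 < M := Real.exp_pos _
    -- small-r bound : c₁ * V r ≤ S r for r ∈ (0, R₂]
    set c₁ : ℝ := m * n / (M * R₂) with hc₁def
    have hc₁pos : 0 < c₁ := by
      apply div_pos (mul_pos hmpos (by exact_mod_cast (by omega : 0 < n))) (mul_pos hMpos hR₂pos)
    have hsmall : ∀ r : ℝ, 0 < r → r ≤ R₂ → c₁ * V r ≤ S r := by
      intro r hr hrR₂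
      have hVr : V r ≤ M * (r ^ n / n) := by
        have h1 : (∫ t in (0:ℝ)..r, S t) ≤ ∫ t in (0:ℝ)..r, t ^ k * M := by
          apply intervalIntegral.integral_mono_on hr.le (hSint 0 r le_rfl hr.le)
          · exact (ContinuousOn.intervalIntegrable (by fun_prop))
          · intro x hx
            rw [hS]
            apply mul_le_mul_of_nonneg_left _ (pow_nonneg hx.1 k)
            exact Real.exp_le_exp.2 (hhi x ⟨hx.1, le_trans hx.2 hrR₂⟩)
        have h2 : (∫ t in (0:ℝ)..r, t ^ k * M) = r ^ n / n * M := by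
          rw [intervalIntegral.integral_mul_const, integral_pow]
          have hcast : ((k:ℝ) + 1) = (n:ℝ) := by exact_mod_cast hkn
          rw [hcast, hkn, zero_pow (by omega : n ≠ 0), sub_zero]
        rw [hVS]
        calc (∫ t in (0:ℝ)..r, S t) ≤ r ^ n / n * M := le_of_le_of_eq h1 h2
          _ = M * (r ^ n / n) := by ring
      have hSr : m * r ^ k ≤ S r := by
        rw [hS]
        calc m * r ^ k = r ^ k * m := by ring
          _ ≤ r ^ k * Real.exp (φ r) := by
              apply mul_le_mul_of_nonneg_left _ (pow_nonneg hr.le k)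
              exact Real.exp_le_exp.2 (hlo r ⟨hr.le, hrR₂⟩)
      have hrn : r ^ n = r ^ k * r := by rw [← pow_succ, hkn]
      have hnpos : (0:ℝ) < n := by exact_mod_cast (by omega : 0 < n)
      calc c₁ * V r ≤ c₁ * (M * (r ^ n / n)) := by
            apply mul_le_mul_of_nonneg_left hVr hc₁pos.le
        _ = m * r ^ k * (r / R₂) := by
            rw [hc₁def, hrn]; field_simp
        _ ≤ m * r ^ k * 1 := by
            apply mul_le_mul_of_nonneg_left _ (by positivity)
            rw [div_le_one hR₂pos]; exact hrR₂
        _ = m * r ^ k := mul_one _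
        _ ≤ S r := hSr
    -- tail bound : for r ≥ R₂, V r ≤ K * S r
    set K : ℝ := V R₂ / S R₂ + 1 with hKdef
    have hSR₂pos : 0 < S R₂ := hSpos R₂ hR₂pos
    have hVR₂nonneg : 0 ≤ V R₂ := by
      rw [← hV0]
      exact hVmono.monotoneOn (mem_Ici.2 le_rfl) (mem_Ici.2 hR₂pos.le) hR₂pos.le
    have hKpos : 0 < K := by positivity
    have htail : ∀ r : ℝ, R₂ ≤ r → V r ≤ K * S r := by
      intro r hr
      have hrpos : 0 < r := lt_of_lt_of_le hR₂pos hr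
      -- S r - S R₂ = ∫ S * G  and  ∫ S ≤ ∫ S * G
      have hSGint : IntervalIntegrable (fun t => S t * G t) volume R₂ r := by
        apply ContinuousOn.intervalIntegrable
        apply ContinuousOn.mul
        · exact hScont.mono fun x hx =>
            le_trans (le_min hR₂pos.le hrpos.le) hx.1
        · exact hGc.mono fun x hx =>
            lt_of_lt_of_le (lt_min hR₂r₀ (lt_of_lt_of_le hR₂r₀ hr)) hx.1
      have hSsub : S r - S R₂ = ∫ t in R₂..r, S t * G t := by
        refine (intervalIntegral.integral_eq_sub_of_hasDerivAt (fun x hx => ?_) hSGint).symm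
        rw [uIcc_of_le hr] at hx
        exact hSd x (lt_of_lt_of_le hR₂r₀ hx.1)
      have hSle : ∀ x ∈ Set.Icc R₂ r, S x ≤ S x * G x := by
        intro x hx
        have hxpos : 0 < x := lt_of_lt_of_le hR₂pos hx.1
        have hG1 : 1 ≤ G x := by
          rw [hGdef]
          have h1 := hφ'R₂ x hx.1
          have : 0 ≤ (k : ℝ) * x⁻¹ := by positivity
          linarith
        exact le_mul_of_one_le_right (hSnonneg x hxpos.le) hG1
      have h1 : (∫ t in R₂..r, S t) ≤ ∫ t in R₂..r, S t * G t :=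
        intervalIntegral.integral_mono_on hr (hSint R₂ r hR₂pos.le hrpos.le) hSGint hSle
      have h2 := hVsub R₂ r hR₂pos.le hrpos.le
      -- V r ≤ V R₂ + S r - S R₂ ≤ V R₂ + S r, and S R₂ ≤ S r
      have hSmon : S R₂ ≤ S r := by
        have h3 : (0:ℝ) ≤ ∫ t in R₂..r, S t := by
          apply intervalIntegral.integral_nonneg hr
          intro u hu
          exact hSnonneg u (le_trans hR₂pos.le hu.1)
        linarith
      have h4 : V r ≤ V R₂ + S r := by linarith
      calc V r ≤ V R₂ + S r := h4
        _ = (V R₂ / S R₂) * S R₂ + S r := by field_simp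
        _ ≤ (V R₂ / S R₂) * S r + S r := by
            apply add_le_add_left
            exact mul_le_mul_of_nonneg_left hSmon (by positivity)
        _ = K * S r := by rw [hKdef]; ring
    refine ⟨min c₁ K⁻¹, lt_min hc₁pos (by positivity), ?_⟩
    intro v hv
    have hWvpos := hWpos v hv
    have hFv : F v = S (W v) := by
      conv_lhs => rw [← hWV v hv]
      exact hF (W v) hWvpos
    have hVv : V (W v) = v := hWV v hv
    have hVnonneg : 0 ≤ v := hv.le
    rw [hFv]
    rcases le_or_gt (W v) R₂ with h | h
    · calc min c₁ K⁻¹ * v ≤ c₁ * v := by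
            apply mul_le_mul_of_nonneg_right (min_le_left _ _) hVnonneg
        _ = c₁ * V (W v) := by rw [hVv]
        _ ≤ S (W v) := hsmall (W v) hWvpos h
    · have h5 := htail (W v) h.le
      rw [hVv] at h5
      calc min c₁ K⁻¹ * v ≤ K⁻¹ * v := by
            apply mul_le_mul_of_nonneg_right (min_le_right _ _) hVnonneg
        _ ≤ K⁻¹ * (K * S (W v)) := by
            apply mul_le_mul_of_nonneg_left h5 (by positivity)
        _ = S (W v) := by field_simp
  exact ⟨hVtop, ⟨V₁, hV₁pos, hconv⟩, hderivtop, hlin⟩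
end

section
/- Let n ≥ 2, let φ : (0,∞) → ℝ be twice differentiable at a point r > 0 and continuous on (0,∞), define V(r) = ∫₀^r t^{n−1} e^{φ(t)} dt (assumed finite for all r > 0) and S(r) = r^{n−1} e^{φ(r)}, and let F = S ∘ V^{−1}. Then F is twice differentiable at V(r) with F″(V(r)) = (φ″(r) − (n−1)/r²) / S(r). Consequently, if φ is twice continuously differentiable on an interval (a,b) ⊂ (0,∞), then F is convex on (V(a), V(b)) if and only if φ″(r) ≥ (n−1)/r² for all r ∈ (a,b). -/
open MeasureTheory Filter Set

/-- In `ℝⁿ` with radial simple density `e^{φ(r)}`, the function `F`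
sending ball volume `V(r)` to sphere surface area `S(r)` is twice differentiable at
`V(r)` with `F''(V(r)) = (φ''(r) - (n-1)/r²)/S(r)` wherever `φ` is twice differentiable;
consequently, if `φ` is twice continuously differentiable on `(a,b) ⊆ (0,∞)`, then `F`
is convex on `(V(a), V(b))` iff `φ''(r) ≥ (n-1)/r²` on `(a,b)`. -/
theorem stmt_9 (n : ℕ) (hn : 2 ≤ n) (φ : ℝ → ℝ)
    (hφc : ContinuousOn φ (Set.Ioi 0))
    (hint : ∀ r > (0:ℝ),
      IntegrableOn (fun t => t ^ (n - 1) * Real.exp (φ t)) (Set.Ioc 0 r))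
    (V S F : ℝ → ℝ)
    (hV : ∀ r : ℝ, V r = ∫ t in Set.Ioc 0 r, t ^ (n - 1) * Real.exp (φ t))
    (hS : ∀ r : ℝ, S r = r ^ (n - 1) * Real.exp (φ r))
    (hF : ∀ r > (0:ℝ), F (V r) = S r) :
    (∀ (r d₂ : ℝ) (ψ' : ℝ → ℝ), 0 < r →
      (∀ᶠ t in nhds r, HasDerivAt φ (ψ' t) t) → HasDerivAt ψ' d₂ r →
      ∃ F' : ℝ → ℝ, (∀ᶠ v in nhds (V r), HasDerivAt F (F' v) v) ∧
        HasDerivAt F' ((d₂ - ((n : ℝ) - 1) / r ^ 2) / S r) (V r)) ∧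
    (∀ (a b : ℝ) (ψ' ψ'' : ℝ → ℝ), 0 < a → a < b →
      (∀ t ∈ Set.Ioo a b, HasDerivAt φ (ψ' t) t) →
      (∀ t ∈ Set.Ioo a b, HasDerivAt ψ' (ψ'' t) t) →
      ContinuousOn ψ'' (Set.Ioo a b) →
      (ConvexOn ℝ (Set.Ioo (V a) (V b)) F ↔
        ∀ r ∈ Set.Ioo a b, ((n : ℝ) - 1) / r ^ 2 ≤ ψ'' r)) := by
  have hn1 : 1 ≤ n := le_trans one_le_two hn
  have hicont : ContinuousOn (fun t : ℝ => t ^ (n - 1) * Real.exp (φ t)) (Set.Ioi 0) :=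
    (continuous_pow _).continuousOn.mul (Real.continuous_exp.comp_continuousOn hφc)
  have hScont : ContinuousOn S (Set.Ioi 0) := hicont.congr fun t _ => hS t
  have hSpos : ∀ t : ℝ, 0 < t → 0 < S t := by
    intro t ht; rw [hS]; positivity
  have hVd : ∀ t : ℝ, 0 < t → HasDerivAt V (S t) t := by
    intro t ht
    have hmeas : StronglyMeasurableAtFilter
        (fun u : ℝ => u ^ (n - 1) * Real.exp (φ u)) (nhds t) volume :=
      hicont.stronglyMeasurableAtFilter isOpen_Ioi t ht
    have hcont : ContinuousAt (fun u : ℝ => u ^ (n - 1) * Real.exp (φ u)) t :=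
      hicont.continuousAt (Ioi_mem_nhds ht)
    have hii : IntervalIntegrable (fun u : ℝ => u ^ (n - 1) * Real.exp (φ u)) volume 0 t :=
      (intervalIntegrable_iff_integrableOn_Ioc_of_le ht.le).2 (hint t ht)
    have h0 := intervalIntegral.integral_hasDerivAt_right hii hmeas hcont
    have heq : V =ᶠ[nhds t] fun u => ∫ x in (0:ℝ)..u, x ^ (n - 1) * Real.exp (φ x) := by
      filter_upwards [Ioi_mem_nhds ht] with u hu
      rw [hV u, intervalIntegral.integral_of_le (le_of_lt hu)]
    have := h0.congr_of_eventuallyEq heq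
    rwa [hS t]
  have hV' : ∀ t : ℝ, 0 < t → HasStrictDerivAt V (S t) t := by
    intro t ht
    refine hasStrictDerivAt_of_hasDerivAt_of_continuousAt ?_ (hScont.continuousAt (Ioi_mem_nhds ht))
    filter_upwards [Ioi_mem_nhds ht] with u hu
    exact hVd u hu
  have part1 : ∀ (r d₂ : ℝ) (ψ' : ℝ → ℝ), 0 < r →
      (∀ᶠ t in nhds r, HasDerivAt φ (ψ' t) t) → HasDerivAt ψ' d₂ r →
      ∃ F' : ℝ → ℝ, (∀ᶠ v in nhds (V r), HasDerivAt F (F' v) v) ∧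
        HasDerivAt F' ((d₂ - ((n : ℝ) - 1) / r ^ 2) / S r) (V r) := by
    intro r d₂ ψ' hr hψ hψ''
    have hSr0 : S r ≠ 0 := (hSpos r hr).ne'
    have hVs : HasStrictDerivAt V (S r) r := hV' r hr
    set W : ℝ → ℝ := hVs.localInverse V (S r) r hSr0 with hWdef
    have hWtend : Tendsto W (nhds (V r)) (nhds r) :=
      (hVs.hasStrictFDerivAt_equiv hSr0).localInverse_tendsto
    have hright : ∀ᶠ v in nhds (V r), V (W v) = v :=
      (hVs.hasStrictFDerivAt_equiv hSr0).eventually_right_inverse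
    have hleft : ∀ᶠ x in nhds r, W (V x) = x :=
      (hVs.hasStrictFDerivAt_equiv hSr0).eventually_left_inverse
    have hgood : ∀ᶠ t in nhds r,
        0 < t ∧ HasDerivAt φ (ψ' t) t ∧ ∀ᶠ y in nhds t, W (V y) = y := by
      filter_upwards [Ioi_mem_nhds hr, hψ, hleft.eventually_nhds] with t h1 h2 h3
      exact ⟨h1, h2, h3⟩
    have hQ : ∀ᶠ v in nhds (V r), 0 < W v ∧ V (W v) = v :=
      ((hWtend.eventually hgood).mono fun v h => h.1).and hright
    -- derivative of S at any point where φ is differentiable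
    have hSd : ∀ t : ℝ, 0 < t → HasDerivAt φ (ψ' t) t →
        HasDerivAt S (S t * (((n : ℝ) - 1) / t + ψ' t)) t := by
      intro t ht hφt
      have hpow : HasDerivAt (fun u : ℝ => u ^ (n - 1))
          ((↑(n - 1) : ℝ) * t ^ (n - 1 - 1)) t := hasDerivAt_pow (n - 1) t
      have hexp : HasDerivAt (fun u => Real.exp (φ u)) (Real.exp (φ t) * ψ' t) t := hφt.exp
      have hmul := hpow.mul hexp
      have hfun : (fun u : ℝ => u ^ (n - 1) * Real.exp (φ u)) = S := by
        funext u; rw [hS u]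
      rw [show ((fun u : ℝ => u ^ (n - 1)) * fun u => Real.exp (φ u)) = S from hfun] at hmul
      refine hmul.congr_deriv (Eq.symm ?_)
      have h2 : n - 1 - 1 = n - 2 := by omega
      have h3 : n - 1 = (n - 2) + 1 := by omega
      have hc : ((n - 1 : ℕ) : ℝ) = (n : ℝ) - 1 := by
        rw [Nat.cast_sub hn1]; norm_num
      rw [hS t, h2, hc]
      rw [show t ^ (n - 1) = t ^ (n - 2) * t by rw [h3, pow_succ]]
      field_simp
    refine ⟨fun v => ((n : ℝ) - 1) / W v + ψ' (W v), ?_, ?_⟩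
    · filter_upwards [hWtend.eventually hgood, hright, hQ.eventually_nhds] with v hg hrv hq
      obtain ⟨htpos, hφt, hWV⟩ := hg
      have hVt : HasStrictDerivAt V (S (W v)) (W v) := hV' (W v) htpos
      have hSt0 : S (W v) ≠ 0 := (hSpos (W v) htpos).ne'
      have hWd : HasDerivAt W (S (W v))⁻¹ v := by
        have h := hVt.to_local_left_inverse hSt0 hWV
        rw [hrv] at h
        exact h.hasDerivAt
      have hcomp : HasDerivAt (S ∘ W)
          (S (W v) * (((n : ℝ) - 1) / W v + ψ' (W v)) * (S (W v))⁻¹) v :=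
        (hSd (W v) htpos hφt).comp v hWd
      have hFeq : F =ᶠ[nhds v] S ∘ W := by
        filter_upwards [hq] with x hx
        obtain ⟨hx1, hx2⟩ := hx
        have h := hF (W x) hx1
        rw [hx2] at h
        exact h
      have hval : S (W v) * (((n : ℝ) - 1) / W v + ψ' (W v)) * (S (W v))⁻¹
          = ((n : ℝ) - 1) / W v + ψ' (W v) := by
        rw [mul_comm, inv_mul_cancel_left₀ hSt0]
      rw [← hval]
      exact hcomp.congr_of_eventuallyEq hFeq
    · have hWd0 : HasDerivAt W (S r)⁻¹ (V r) := by
        have := hVs.to_localInverse (hf' := hSr0)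
        exact this.hasDerivAt
      have hWVr : W (V r) = r :=
        (hVs.hasStrictFDerivAt_equiv hSr0).localInverse_apply_image
      have hG : HasDerivAt (fun t => ((n : ℝ) - 1) / t + ψ' t)
          (-(((n : ℝ) - 1) / r ^ 2) + d₂) r := by
        have h1 : HasDerivAt (fun t : ℝ => ((n : ℝ) - 1) / t)
            (-(((n : ℝ) - 1) / r ^ 2)) r := by
          have h := (hasDerivAt_inv (ne_of_gt hr)).const_mul ((n : ℝ) - 1)
          have : (fun t : ℝ => ((n : ℝ) - 1) / t) = fun t : ℝ => ((n : ℝ) - 1) * t⁻¹ := by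
            funext t; rw [div_eq_mul_inv]
          rw [this]
          refine h.congr_deriv (Eq.symm ?_)
          ring
        exact h1.add hψ''
      have hcomp : HasDerivAt (fun v => ((n : ℝ) - 1) / W v + ψ' (W v))
          ((-(((n : ℝ) - 1) / r ^ 2) + d₂) * (S r)⁻¹) (V r) := by
        have hg : HasDerivAt (fun t => ((n : ℝ) - 1) / t + ψ' t)
            (-(((n : ℝ) - 1) / r ^ 2) + d₂) (W (V r)) := hWVr.symm ▸ hG
        exact hg.comp (V r) hWd0
      have : (-(((n : ℝ) - 1) / r ^ 2) + d₂) * (S r)⁻¹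
          = (d₂ - ((n : ℝ) - 1) / r ^ 2) / S r := by
        rw [div_eq_mul_inv]; ring
      rw [← this]
      exact hcomp
  refine ⟨part1, ?_⟩
  intro a b ψ' ψ'' ha hab hψ hψ2 _hψ2c
  have hmem : ∀ t ∈ Icc a b, (0:ℝ) < t := fun t ht => lt_of_lt_of_le ha ht.1
  have hVcont : ContinuousOn V (Icc a b) := fun t ht =>
    (hVd t (hmem t ht)).continuousAt.continuousWithinAt
  have hVmono : StrictMonoOn V (Icc a b) := by
    apply strictMonoOn_of_deriv_pos (convex_Icc a b) hVcont
    intro t ht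
    rw [interior_Icc] at ht
    have htp : (0:ℝ) < t := lt_trans ha ht.1
    rw [(hVd t htp).deriv]
    exact hSpos t htp
  have hVab : V a < V b := hVmono (left_mem_Icc.2 hab.le) (right_mem_Icc.2 hab.le) hab
  have hsurj : Ioo (V a) (V b) ⊆ V '' Ioo a b := intermediate_value_Ioo hab.le hVcont
  have hmaps : ∀ r ∈ Ioo a b, V r ∈ Ioo (V a) (V b) := by
    intro r hr
    exact ⟨hVmono (left_mem_Icc.2 hab.le) ⟨hr.1.le, hr.2.le⟩ hr.1,
      hVmono ⟨hr.1.le, hr.2.le⟩ (right_mem_Icc.2 hab.le) hr.2⟩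
  have key : ∀ r ∈ Ioo a b, ∃ F' : ℝ → ℝ,
      (∀ᶠ v in nhds (V r), HasDerivAt F (F' v) v) ∧
      HasDerivAt F' ((ψ'' r - ((n : ℝ) - 1) / r ^ 2) / S r) (V r) := by
    intro r hr
    refine part1 r (ψ'' r) ψ' (lt_trans ha hr.1) ?_ (hψ2 r hr)
    filter_upwards [isOpen_Ioo.mem_nhds hr] with t ht
    exact hψ t ht
  have hdiff : ∀ v ∈ Ioo (V a) (V b), DifferentiableAt ℝ F v ∧
      ∃ r ∈ Ioo a b, V r = v ∧
        HasDerivAt (deriv F) ((ψ'' r - ((n : ℝ) - 1) / r ^ 2) / S r) v := by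
    intro v hv
    obtain ⟨r, hr, hrv⟩ := hsurj hv
    obtain ⟨F', h1, h2⟩ := key r hr
    subst hrv
    have hdF : deriv F =ᶠ[nhds (V r)] F' := by
      filter_upwards [h1] with x hx using hx.deriv
    exact ⟨h1.self_of_nhds.differentiableAt, r, hr, rfl, h2.congr_of_eventuallyEq hdF⟩
  constructor
  · intro hc r hr
    have M : MonotoneOn (deriv F) (Ioo (V a) (V b)) :=
      hc.monotoneOn_deriv fun x hx => (hdiff x hx).1
    obtain ⟨F', h1, h2⟩ := key r hr
    have hdF : deriv F =ᶠ[nhds (V r)] F' := by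
      filter_upwards [h1] with x hx using hx.deriv
    have hg : HasDerivAt (deriv F) ((ψ'' r - ((n : ℝ) - 1) / r ^ 2) / S r) (V r) :=
      h2.congr_of_eventuallyEq hdF
    have hvmem : V r ∈ Ioo (V a) (V b) := hmaps r hr
    have h0 : 0 ≤ (ψ'' r - ((n : ℝ) - 1) / r ^ 2) / S r := by
      have htendsto : Tendsto (slope (deriv F) (V r)) (nhdsWithin (V r) (Ioi (V r)))
          (nhds ((ψ'' r - ((n : ℝ) - 1) / r ^ 2) / S r)) :=
        (hasDerivAt_iff_tendsto_slope.mp hg).mono_left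
          (nhdsWithin_mono _ fun x hx => ne_of_gt hx)
      refine ge_of_tendsto htendsto ?_
      filter_upwards [self_mem_nhdsWithin,
        eventually_nhdsWithin_of_eventually_nhds (isOpen_Ioo.mem_nhds hvmem)] with x hx1 hx2
      have hle : deriv F (V r) ≤ deriv F x := M hvmem hx2 (le_of_lt hx1)
      rw [slope_def_field]
      exact div_nonneg (sub_nonneg.2 hle) (sub_nonneg.2 (le_of_lt hx1))
    have hSr : 0 < S r := hSpos r (lt_trans ha hr.1)
    have h1' : 0 ≤ ψ'' r - ((n : ℝ) - 1) / r ^ 2 := by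
      have := mul_nonneg h0 hSr.le
      rwa [div_mul_cancel₀ _ hSr.ne'] at this
    linarith
  · intro H
    apply convexOn_of_deriv2_nonneg (convex_Ioo _ _)
    · intro v hv
      exact (hdiff v hv).1.continuousAt.continuousWithinAt
    · rw [interior_Ioo]
      exact fun v hv => (hdiff v hv).1.differentiableWithinAt
    · rw [interior_Ioo]
      intro v hv
      obtain ⟨_, r, hr, _, hg⟩ := hdiff v hv
      exact hg.differentiableAt.differentiableWithinAt
    · intro v hv
      rw [interior_Ioo] at hv
      obtain ⟨_, r, hr, _, hg⟩ := hdiff v hv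
      have hit : deriv^[2] F v = deriv (deriv F) v := by
        rw [show (2:ℕ) = 1 + 1 from rfl, Function.iterate_succ, Function.iterate_one]
        rfl
      rw [hit, hg.deriv]
      have hSr : 0 < S r := hSpos r (lt_trans ha hr.1)
      exact div_nonneg (sub_nonneg.2 (H r hr)) hSr.le
end

section
/- Let φ : (0,∞) → ℝ be twice continuously differentiable, define P(r) = 2π r e^{φ(r)} and A(r) = ∫₀^r 2π t e^{2φ(t)} dt (assumed finite for all r > 0), and let 0 < a < b. Then P ∘ A^{−1} is convex on (A(a), A(b)) if and only if φ″(r) ≥ φ′(r)² + φ′(r)/r + 1/r² for all r ∈ (a,b). -/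
open MeasureTheory Filter Set

open Topology

/-- If `f` is monotone on a neighborhood of `r` and has derivative `f'` at `r`,
then `f' ≥ 0`. -/
lemma aux_deriv_nonneg_of_monotoneOn {f : ℝ → ℝ} {s : Set ℝ} {r f' : ℝ} (hs : s ∈ 𝓝 r)
    (hm : MonotoneOn f s) (hr : r ∈ s) (hd : HasDerivAt f f' r) : 0 ≤ f' := by
  rw [hasDerivAt_iff_tendsto_slope] at hd
  refine ge_of_tendsto hd ?_
  filter_upwards [self_mem_nhdsWithin, mem_nhdsWithin_of_mem_nhds hs] with t ht hts
  rcases lt_or_gt_of_ne (ht : t ≠ r) with h | h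
  · rw [slope_def_field]
    exact div_nonneg_iff.mpr (Or.inr ⟨by linarith [hm hts hr h.le], by linarith⟩)
  · rw [slope_def_field]
    exact div_nonneg (by linarith [hm hr hts h.le]) (by linarith)

/-- In `ℝ² ∖ {0}` with conformal metric `e^{φ(r)} ds`, the perimeter
of circles `P(r) = 2π r e^{φ(r)}` as a function of the enclosed area
`A(r) = ∫₀^r 2π t e^{2φ(t)} dt` is convex on `(A(a), A(b))` iff
`φ''(r) ≥ φ'(r)² + φ'(r)/r + 1/r²` on `(a,b)`. -/
theorem stmt_16 (φ φ' φ'' : ℝ → ℝ)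
    (hφ' : ∀ r > (0:ℝ), HasDerivAt φ (φ' r) r)
    (hφ'' : ∀ r > (0:ℝ), HasDerivAt φ' (φ'' r) r)
    (hφ''c : ContinuousOn φ'' (Set.Ioi 0))
    (P A F : ℝ → ℝ)
    (hP : ∀ r : ℝ, P r = 2 * Real.pi * r * Real.exp (φ r))
    (hint : ∀ r > (0:ℝ),
      IntegrableOn (fun t => 2 * Real.pi * t * Real.exp (2 * φ t)) (Set.Ioc 0 r))
    (hA : ∀ r > (0:ℝ), A r = ∫ t in Set.Ioc 0 r, 2 * Real.pi * t * Real.exp (2 * φ t))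
    (hF : ∀ r > (0:ℝ), F (A r) = P r)
    (a b : ℝ) (ha : 0 < a) (hab : a < b) :
    ConvexOn ℝ (Set.Ioo (A a) (A b)) F ↔
      ∀ r ∈ Set.Ioo a b, φ' r ^ 2 + φ' r / r + 1 / r ^ 2 ≤ φ'' r := by
  have hab' : (0:ℝ) < b := lt_trans ha hab
  set g : ℝ → ℝ := fun t => 2 * Real.pi * t * Real.exp (2 * φ t) with hg
  set G : ℝ → ℝ := fun r => (r⁻¹ + φ' r) * Real.exp (-φ r) with hG
  set G' : ℝ → ℝ := fun r =>
    (φ'' r - φ' r ^ 2 - φ' r / r - 1 / r ^ 2) * Real.exp (-φ r) with hG'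
  have hTpos : Set.Ioo a b ⊆ Set.Ioi 0 := fun r hr => lt_trans ha hr.1
  -- continuity of φ, φ' and g on (0,∞)
  have hφc : ContinuousOn φ (Set.Ioi 0) := fun r hr =>
    ((hφ' r hr).continuousAt).continuousWithinAt
  have hgc : ContinuousOn g (Set.Ioi 0) := by
    apply ContinuousOn.mul
    · exact (continuous_const.mul continuous_id).continuousOn
    · exact (hφc.const_smul (2:ℝ)).rexp
  have hgpos : ∀ r > (0:ℝ), 0 < g r := fun r hr => by
    have h1 : (0:ℝ) < 2 * Real.pi * r := by positivity
    exact mul_pos h1 (Real.exp_pos _)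
  -- A has derivative g on (0,∞)
  have hAd : ∀ r > (0:ℝ), HasDerivAt A (g r) r := by
    intro r hr
    have hca : ContinuousAt g r :=
      hgc.continuousAt (isOpen_Ioi.mem_nhds hr)
    have hii : IntervalIntegrable g volume 0 r :=
      (intervalIntegrable_iff_integrableOn_Ioc_of_le hr.le).mpr (hint r hr)
    have H : HasDerivAt (fun u => ∫ t in (0:ℝ)..u, g t) (g r) r :=
      intervalIntegral.integral_hasDerivAt_right hii
        (hgc.stronglyMeasurableAtFilter isOpen_Ioi r hr) hca
    refine H.congr_of_eventuallyEq ?_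
    filter_upwards [isOpen_Ioi.mem_nhds hr] with u (hu : (0:ℝ) < u)
    rw [hA u hu, intervalIntegral.integral_of_le hu.le]
  have hAc : ContinuousOn A (Set.Ioi 0) := fun r hr =>
    ((hAd r hr).continuousAt).continuousWithinAt
  -- A is strictly monotone on (0,∞)
  have hAsm : StrictMonoOn A (Set.Ioi 0) := by
    refine strictMonoOn_of_deriv_pos (convex_Ioi 0) hAc ?_
    intro x hx
    rw [interior_Ioi] at hx
    rw [(hAd x hx).deriv]
    exact hgpos x hx
  have hAT : ∀ r ∈ Set.Ioo a b, A r ∈ Set.Ioo (A a) (A b) := by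
    intro r hr
    exact ⟨hAsm (Set.mem_Ioi.2 ha) (hTpos hr) hr.1,
      hAsm (hTpos hr) (Set.mem_Ioi.2 hab') hr.2⟩
  -- surjectivity of A : Ioo a b → Ioo (A a) (A b)
  have hsurj : Set.Ioo (A a) (A b) ⊆ A '' Set.Ioo a b := by
    have : ContinuousOn A (Set.Icc a b) :=
      hAc.mono (fun x hx => lt_of_lt_of_le ha hx.1)
    exact intermediate_value_Ioo hab.le this
  -- inverse function ρ
  set ρ : ℝ → ℝ := Function.invFunOn A (Set.Ioo a b) with hρ
  have hρT : ∀ x ∈ Set.Ioo (A a) (A b), ρ x ∈ Set.Ioo a b := fun x hx => by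
    obtain ⟨r, hrT, hrx⟩ := hsurj hx
    exact Function.invFunOn_mem ⟨r, hrT, hrx⟩
  have hAρ : ∀ x ∈ Set.Ioo (A a) (A b), A (ρ x) = x := fun x hx => by
    obtain ⟨r, hrT, hrx⟩ := hsurj hx
    exact Function.invFunOn_eq ⟨r, hrT, hrx⟩
  have hρA : ∀ r ∈ Set.Ioo a b, ρ (A r) = r := fun r hr =>
    (hAsm.injOn.mono hTpos).leftInvOn_invFunOn hr
  have hρpos : ∀ x ∈ Set.Ioo (A a) (A b), 0 < ρ x := fun x hx => hTpos (hρT x hx)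
  have hρmono : ∀ x ∈ Set.Ioo (A a) (A b), ∀ y ∈ Set.Ioo (A a) (A b),
      x ≤ y → ρ x ≤ ρ y := by
    intro x hx y hy hxy
    by_contra h
    push_neg at h
    have h2 := hAsm (hTpos (hρT y hy)) (hTpos (hρT x hx)) h
    rw [hAρ x hx, hAρ y hy] at h2
    exact absurd hxy (not_le.2 h2)
  have hρsm : StrictMonoOn ρ (Set.Ioo (A a) (A b)) := by
    intro x hx y hy hxy
    rcases lt_or_ge (ρ x) (ρ y) with h | h
    · exact h
    · exfalso
      have h2 : A (ρ y) ≤ A (ρ x) :=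
        hAsm.monotoneOn (hTpos (hρT y hy)) (hTpos (hρT x hx)) h
      rw [hAρ x hx, hAρ y hy] at h2
      exact absurd h2 (not_le.2 hxy)
  -- continuity of ρ
  have hρc : ∀ x ∈ Set.Ioo (A a) (A b), ContinuousAt ρ x := by
    intro x hx
    refine hρsm.continuousAt_of_image_mem_nhds (isOpen_Ioo.mem_nhds hx) ?_
    have hsub : Set.Ioo a b ⊆ ρ '' Set.Ioo (A a) (A b) := by
      intro r hr
      exact ⟨A r, hAT r hr, hρA r hr⟩
    exact mem_of_superset (isOpen_Ioo.mem_nhds (hρT x hx)) hsub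
  -- derivative of ρ
  have hρd : ∀ x ∈ Set.Ioo (A a) (A b), HasDerivAt ρ (g (ρ x))⁻¹ x := by
    intro x hx
    have h1 : HasDerivAt A (g (ρ x)) (ρ x) := hAd _ (hρpos x hx)
    refine HasDerivAt.of_local_left_inverse (hρc x hx) h1
      (ne_of_gt (hgpos _ (hρpos x hx))) ?_
    filter_upwards [isOpen_Ioo.mem_nhds hx] with y hy
    exact hAρ y hy
  -- derivative of P
  have hPd : ∀ r > (0:ℝ), HasDerivAt P
      (2 * Real.pi * Real.exp (φ r) + 2 * Real.pi * r * (Real.exp (φ r) * φ' r)) r := by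
    intro r hr
    have h1 : HasDerivAt (fun t : ℝ => 2 * Real.pi * t) (2 * Real.pi) r := by
      simpa using (hasDerivAt_id r).const_mul (2 * Real.pi)
    have h2 : HasDerivAt (fun t => Real.exp (φ t)) (Real.exp (φ r) * φ' r) r :=
      (hφ' r hr).exp
    have h3 := h1.mul h2
    refine HasDerivAt.congr_of_eventuallyEq ?_ (Eventually.of_forall fun t => hP t)
    exact h3
  -- key identity: P'(r)/g(r) = G(r)
  have hkey : ∀ r > (0:ℝ),
      (2 * Real.pi * Real.exp (φ r) + 2 * Real.pi * r * (Real.exp (φ r) * φ' r)) * (g r)⁻¹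
        = G r := by
    intro r hr
    have he2 : Real.exp (2 * φ r) = Real.exp (φ r) * Real.exp (φ r) := by
      rw [two_mul, Real.exp_add]
    have hrne : r ≠ 0 := ne_of_gt hr
    have hne : Real.exp (φ r) ≠ 0 := Real.exp_ne_zero _
    have hpine : (2 * Real.pi) ≠ 0 := by positivity
    rw [hG, hg]
    simp only []
    rw [he2, Real.exp_neg]
    field_simp
  -- derivative of F
  have hFd : ∀ x ∈ Set.Ioo (A a) (A b), HasDerivAt F (G (ρ x)) x := by
    intro x hx
    have hc : HasDerivAt (P ∘ ρ)
        ((2 * Real.pi * Real.exp (φ (ρ x)) +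
          2 * Real.pi * (ρ x) * (Real.exp (φ (ρ x)) * φ' (ρ x))) * (g (ρ x))⁻¹) x :=
      (hPd (ρ x) (hρpos x hx)).comp x (hρd x hx)
    rw [hkey (ρ x) (hρpos x hx)] at hc
    refine hc.congr_of_eventuallyEq ?_
    filter_upwards [isOpen_Ioo.mem_nhds hx] with y hy
    have h1 := hF (ρ y) (hρpos y hy)
    rw [hAρ y hy] at h1
    simp only [Function.comp_apply]
    exact h1
  have hderivF : ∀ x ∈ Set.Ioo (A a) (A b), deriv F x = G (ρ x) :=
    fun x hx => (hFd x hx).deriv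
  -- derivative of G
  have hGd : ∀ r > (0:ℝ), HasDerivAt G (G' r) r := by
    intro r hr
    have hrne : r ≠ 0 := ne_of_gt hr
    have h1 : HasDerivAt (fun t : ℝ => t⁻¹ + φ' t) (-(r ^ 2)⁻¹ + φ'' r) r :=
      (hasDerivAt_inv hrne).add (hφ'' r hr)
    have h2 : HasDerivAt (fun t => Real.exp (-φ t)) (Real.exp (-φ r) * -φ' r) r :=
      ((hφ' r hr).neg).exp
    have h3 := h1.mul h2
    refine h3.congr_deriv ?_
    rw [hG']
    simp only []
    field_simp
    ring
  constructor
  · -- convexity implies the differential inequality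
    intro hconv r hrT
    have hrpos : 0 < r := hTpos hrT
    have hmono : MonotoneOn (deriv F) (Set.Ioo (A a) (A b)) :=
      hconv.monotoneOn_deriv (fun x hx => (hFd x hx).differentiableAt)
    have hGm : MonotoneOn G (Set.Ioo a b) := by
      intro x hx y hy hxy
      have h1 := hmono (hAT x hx) (hAT y hy)
        (hAsm.monotoneOn (hTpos hx) (hTpos hy) hxy)
      rw [hderivF _ (hAT x hx), hderivF _ (hAT y hy), hρA x hx, hρA y hy] at h1
      exact h1
    have h0 : 0 ≤ G' r :=
      aux_deriv_nonneg_of_monotoneOn (isOpen_Ioo.mem_nhds hrT) hGm hrT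
        (hGd r hrpos)
    have hep : 0 < Real.exp (-φ r) := Real.exp_pos _
    rw [hG'] at h0
    simp only [] at h0
    nlinarith [h0, hep]
  · -- the differential inequality implies convexity
    intro hin
    have hG'nn : ∀ r ∈ Set.Ioo a b, 0 ≤ G' r := by
      intro r hr
      have h1 := hin r hr
      have hep : (0:ℝ) ≤ Real.exp (-φ r) := (Real.exp_pos _).le
      rw [hG']
      simp only []
      nlinarith [h1, hep]
    have hGm : MonotoneOn G (Set.Ioo a b) := by
      refine monotoneOn_of_deriv_nonneg (convex_Ioo a b) ?_ ?_ ?_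
      · exact fun r hr => ((hGd r (hTpos hr)).continuousAt).continuousWithinAt
      · intro r hr
        rw [interior_Ioo] at hr
        exact ((hGd r (hTpos hr)).differentiableAt).differentiableWithinAt
      · intro r hr
        rw [interior_Ioo] at hr
        rw [(hGd r (hTpos hr)).deriv]
        exact hG'nn r hr
    have hmono : MonotoneOn (deriv F) (interior (Set.Ioo (A a) (A b))) := by
      rw [interior_Ioo]
      intro x hx y hy hxy
      rw [hderivF x hx, hderivF y hy]
      exact hGm (hρT x hx) (hρT y hy) (hρmono x hx y hy hxy)
    refine MonotoneOn.convexOn_of_deriv (convex_Ioo _ _) ?_ ?_ hmono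
    · exact fun x hx => ((hFd x hx).continuousAt).continuousWithinAt
    · intro x hx
      rw [interior_Ioo] at hx
      exact ((hFd x hx).differentiableAt).differentiableWithinAt
end

section
/- Let n ≥ 1. There is no continuous function Ψ : (0,∞) → (0,∞) satisfying all of the following: v(r) := ∫₀^r t^{n−1} Ψ(t) dt is finite for every r > 0; lim_{r→0⁺} r^{n−1} Ψ(r) = 0; and there exists a convex function F on the interval v((0,∞)) with r^{n−1} Ψ(r) = F(v(r)) for all r > 0. -/
open MeasureTheory Filter Set

set_option maxHeartbeats 1000000 in
/-- There is no continuous simple radial density `Ψ : (0,∞) → (0,∞)`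
with finite volume at the origin such that the sphere area `r ↦ r^{n-1} Ψ(r)` tends to
`0` at the origin while being a convex function of the ball volume
`v(r) = ∫₀^r t^{n-1} Ψ(t) dt`. -/
theorem stmt_17 (n : ℕ) (hn : 1 ≤ n) :
    ¬ ∃ (Ψ F : ℝ → ℝ),
      ContinuousOn Ψ (Set.Ioi 0) ∧ (∀ r > (0:ℝ), 0 < Ψ r) ∧
      (∀ r > (0:ℝ), IntegrableOn (fun t => t ^ (n - 1) * Ψ t) (Set.Ioc 0 r)) ∧
      Tendsto (fun r => r ^ (n - 1) * Ψ r) (nhdsWithin 0 (Set.Ioi 0)) (nhds 0) ∧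
      ConvexOn ℝ ((fun r => ∫ t in Set.Ioc 0 r, t ^ (n - 1) * Ψ t) '' Set.Ioi 0) F ∧
      (∀ r > (0:ℝ), r ^ (n - 1) * Ψ r = F (∫ t in Set.Ioc 0 r, t ^ (n - 1) * Ψ t)) := by
  rintro ⟨Ψ, F, hΨcont, hΨpos, hint, htend, hconv, heq⟩
  set f : ℝ → ℝ := fun t => t ^ (n - 1) * Ψ t with hfdef
  set v : ℝ → ℝ := fun r => ∫ t in Set.Ioc 0 r, t ^ (n - 1) * Ψ t with hvdef
  -- positivity of the integrand on (0,∞)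
  have hfpos : ∀ t : ℝ, 0 < t → 0 < f t := fun t ht =>
    mul_pos (pow_pos ht _) (hΨpos t ht)
  -- a.e. nonnegativity on Ioc 0 r
  have hnn : ∀ r : ℝ, 0 ≤ᵐ[volume.restrict (Set.Ioc 0 r)] f := by
    intro r
    filter_upwards [ae_restrict_mem measurableSet_Ioc] with t ht
    exact (hfpos t ht.1).le
  -- monotonicity of v
  have hmono : ∀ {r s : ℝ}, 0 < r → r ≤ s → v r ≤ v s := by
    intro r s hr hrs
    exact setIntegral_mono_set (hint s (lt_of_lt_of_le hr hrs)) (hnn s)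
      ((Set.Ioc_subset_Ioc_right hrs).eventuallyLE)
  -- positivity of v
  have hvpos : ∀ r : ℝ, 0 < r → 0 < v r := by
    intro r hr
    rw [hvdef]
    rw [setIntegral_pos_iff_support_of_nonneg_ae (hnn r) (hint r hr)]
    have hsub : Set.Ioc 0 r ⊆ Function.support f := fun t ht => (hfpos t ht.1).ne'
    calc (0 : ENNReal) < volume (Set.Ioc (0:ℝ) r) := by
          rw [Real.volume_Ioc]; simpa using hr
      _ ≤ volume (Function.support f ∩ Set.Ioc 0 r) := by
          rw [Set.inter_eq_self_of_subset_right hsub]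
  -- v tends to 0 at 0⁺
  have hv0 : Tendsto v (nhdsWithin 0 (Set.Ioi 0)) (nhds 0) := by
    have hanti : Antitone (fun k : ℕ => Set.Ioc (0:ℝ) (1 / (k + 1))) := by
      intro i j hij
      apply Set.Ioc_subset_Ioc_right
      apply one_div_le_one_div_of_le (by positivity)
      exact_mod_cast by exact_mod_cast add_le_add_left (Nat.cast_le.mpr hij) 1
    have hiInter : (⋂ k : ℕ, Set.Ioc (0:ℝ) (1 / (k + 1))) = ∅ := by
      ext x
      simp only [Set.mem_iInter, Set.mem_Ioc, Set.mem_empty_iff_false, iff_false, not_forall]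
      by_cases hx : 0 < x
      · obtain ⟨k, hk⟩ := exists_nat_one_div_lt hx
        exact ⟨k, fun h => absurd hk (not_lt.mpr h.2)⟩
      · exact ⟨0, fun h => hx h.1⟩
    have hseq : Tendsto (fun k : ℕ => v (1 / (k + 1))) atTop (nhds 0) := by
      have := tendsto_setIntegral_of_antitone (μ := volume) (f := f)
        (s := fun k : ℕ => Set.Ioc (0:ℝ) (1 / (k + 1)))
        (fun _ => measurableSet_Ioc) hanti ⟨0, hint _ (by norm_num)⟩
      rw [hiInter] at this
      simpa using this
    rw [Metric.tendsto_nhdsWithin_nhds]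
    intro ε hε
    obtain ⟨k, hk⟩ := (hseq.eventually (gt_mem_nhds hε)).exists
    refine ⟨1 / (k + 1), by positivity, fun {r} hr hdist => ?_⟩
    have hrk : r ≤ 1 / (k + 1) := by
      have := hdist
      rw [Real.dist_eq, sub_zero, abs_of_pos (Set.mem_Ioi.mp hr)] at this
      exact this.le
    have h1 : v r ≤ v (1 / (k + 1)) := hmono (Set.mem_Ioi.mp hr) hrk
    rw [Real.dist_eq, sub_zero, abs_of_pos (hvpos r (Set.mem_Ioi.mp hr))]
    exact lt_of_le_of_lt h1 hk
  -- membership in the convex set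
  have hmem : ∀ r : ℝ, 0 < r →
      v r ∈ (fun r => ∫ t in Set.Ioc 0 r, t ^ (n - 1) * Ψ t) '' Set.Ioi 0 :=
    fun r hr => ⟨r, hr, rfl⟩
  -- choose ε₀ ∈ (0,1) with v ε₀ < v 1 / 2
  have hv1 : 0 < v 1 := hvpos 1 one_pos
  obtain ⟨ε₀, hε₀mem, hε₀small⟩ : ∃ ε₀, ε₀ ∈ Set.Ioo (0:ℝ) 1 ∧ v ε₀ < v 1 / 2 := by
    have h1 : ∀ᶠ r in nhdsWithin 0 (Set.Ioi 0), v r < v 1 / 2 :=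
      hv0.eventually (gt_mem_nhds (by linarith))
    have h2 : ∀ᶠ r in nhdsWithin 0 (Set.Ioi 0), r ∈ Set.Ioo (0:ℝ) 1 :=
      eventually_iff.mpr (Ioo_mem_nhdsGT one_pos)
    exact ((h2.and h1).exists)
  obtain ⟨hε₀pos, hε₀lt1⟩ := hε₀mem
  set K : ℝ := 2 * f 1 / v 1 with hKdef
  have hf1 : 0 < f 1 := hfpos 1 one_pos
  have hK : 0 < K := by positivity
  -- key: f s ≤ K * v s for 0 < s ≤ ε₀
  have hkey : ∀ s : ℝ, 0 < s → s ≤ ε₀ → f s ≤ K * v s := by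
    intro s hs hsε₀
    have hs1 : s ≤ 1 := hsε₀.trans hε₀lt1.le
    have hvs1 : v s ≤ v 1 := hmono hs hs1
    have hvspos : 0 < v s := hvpos s hs
    -- eventual inequality in ε
    have hev : ∀ᶠ ε in nhdsWithin 0 (Set.Ioi 0), f s ≤ f ε + K * v s := by
      filter_upwards [Ioo_mem_nhdsGT hs] with ε hεmem
      obtain ⟨hεpos, hεs⟩ := hεmem
      have hεε₀ : ε ≤ ε₀ := hεs.le.trans hsε₀
      have ha : v ε < v 1 / 2 := lt_of_le_of_lt (hmono hεpos hεε₀) hε₀small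
      have hapos : 0 < v ε := hvpos ε hεpos
      have hax : v ε ≤ v s := hmono hεpos hεs.le
      have hab : v ε < v 1 := by linarith
      set a := v ε
      set b := v 1
      set x := v s
      have hd : 0 < b - a := by linarith
      set θ : ℝ := (b - x) / (b - a) with hθdef
      have hθnn : 0 ≤ θ := div_nonneg (by linarith) hd.le
      have hθ'nn : 0 ≤ 1 - θ := by
        rw [hθdef]
        rw [sub_nonneg, div_le_one hd]
        linarith
      have hcomb : θ • a + (1 - θ) • b = x := by
        have hθm : θ * (b - a) = b - x := by rw [hθdef]; exact div_mul_cancel₀ _ hd.ne'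
        simp only [smul_eq_mul]
        linear_combination -hθm
      have := hconv.2 (hmem ε hεpos) (hmem 1 one_pos) hθnn hθ'nn (by ring)
      rw [hcomb] at this
      have hFx : F x = f s := (heq s hs).symm
      have hFa : F a = f ε := (heq ε hεpos).symm
      have hFb : F b = f 1 := (heq 1 one_pos).symm
      rw [hFx, hFa, hFb] at this
      simp only [smul_eq_mul] at this
      -- bound the two terms
      have hθle1 : θ ≤ 1 := by linarith
      have hfε : 0 ≤ f ε := (hfpos ε hεpos).le
      have term1 : θ * f ε ≤ f ε := by nlinarith
      have h1θ : 1 - θ = (x - a) / (b - a) := by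
        rw [hθdef]; field_simp; ring
      have term2 : (1 - θ) * f 1 ≤ K * x := by
        have e1 : (x - a) / (b - a) ≤ x / (b / 2) :=
          div_le_div₀ hvspos.le (by linarith) (by linarith) (by linarith)
        have e2 : x / (b / 2) * f 1 = K * x := by
          rw [hKdef]; field_simp
        rw [h1θ]
        calc (x - a) / (b - a) * f 1 ≤ x / (b / 2) * f 1 :=
              mul_le_mul_of_nonneg_right e1 hf1.le
          _ = K * x := e2
      calc f s ≤ θ * f ε + (1 - θ) * f 1 := this
        _ ≤ f ε + K * x := add_le_add term1 term2
    -- take the limit ε → 0⁺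
    have hlim : Tendsto (fun ε => f ε + K * v s) (nhdsWithin 0 (Set.Ioi 0))
        (nhds (0 + K * v s)) := htend.add_const _
    have := ge_of_tendsto hlim hev
    linarith [this]
  -- choose r₀ and derive the lower bound on v
  set r₀ : ℝ := min ε₀ (v 1 / (4 * f 1)) with hr₀def
  have hr₀pos : 0 < r₀ := lt_min hε₀pos (by positivity)
  have hr₀ε₀ : r₀ ≤ ε₀ := min_le_left _ _
  have hKr₀ : K * r₀ ≤ 1 / 2 := by
    have h2 : r₀ ≤ v 1 / (4 * f 1) := min_le_right _ _
    have h3 : K * r₀ ≤ K * (v 1 / (4 * f 1)) := mul_le_mul_of_nonneg_left h2 hK.le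
    have h4 : K * (v 1 / (4 * f 1)) = 1 / 2 := by
      rw [hKdef]; field_simp; ring
    linarith
  have hlow : ∀ r : ℝ, 0 < r → r ≤ r₀ → v r₀ / 2 ≤ v r := by
    intro r hr hrr₀
    have hsplit : v r₀ = v r + ∫ t in Set.Ioc r r₀, f t := by
      simp only [hvdef]
      have hun : Set.Ioc (0:ℝ) r ∪ Set.Ioc r r₀ = Set.Ioc 0 r₀ :=
        Set.Ioc_union_Ioc_eq_Ioc hr.le hrr₀
      rw [← hun, setIntegral_union (Set.Ioc_disjoint_Ioc_of_le le_rfl) measurableSet_Ioc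
        ((hint r₀ hr₀pos).mono_set (by rw [← hun]; exact Set.subset_union_left))
        ((hint r₀ hr₀pos).mono_set (by rw [← hun]; exact Set.subset_union_right))]
    have hbound : (∫ t in Set.Ioc r r₀, f t) ≤ K * v r₀ * (r₀ - r) := by
      have hintr : IntegrableOn f (Set.Ioc r r₀) volume :=
        (hint r₀ hr₀pos).mono_set (Set.Ioc_subset_Ioc_left hr.le)
      have hconst : IntegrableOn (fun _ : ℝ => K * v r₀) (Set.Ioc r r₀) volume :=
        integrableOn_const (by rw [Real.volume_Ioc]; exact ENNReal.ofReal_ne_top)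
      have hptwise : ∀ t ∈ Set.Ioc r r₀, f t ≤ K * v r₀ := by
        intro t ht
        have htpos : 0 < t := lt_trans hr ht.1
        have h1 : f t ≤ K * v t := hkey t htpos (ht.2.trans hr₀ε₀)
        have h2 : v t ≤ v r₀ := hmono htpos ht.2
        nlinarith
      calc (∫ t in Set.Ioc r r₀, f t) ≤ ∫ _ in Set.Ioc r r₀, K * v r₀ :=
            setIntegral_mono_on hintr hconst measurableSet_Ioc hptwise
        _ = (r₀ - r) * (K * v r₀) := by
            rw [setIntegral_const, Real.volume_real_Ioc, smul_eq_mul,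
              max_eq_left (by linarith)]
        _ = K * v r₀ * (r₀ - r) := by ring
    have hvr₀pos : 0 < v r₀ := hvpos r₀ hr₀pos
    have h0 : K * v r₀ * (r₀ - r) ≤ K * v r₀ * r₀ :=
      mul_le_mul_of_nonneg_left (by linarith) (mul_nonneg hK.le hvr₀pos.le)
    have h1 : K * r₀ * v r₀ ≤ 1 / 2 * v r₀ :=
      mul_le_mul_of_nonneg_right hKr₀ hvr₀pos.le
    have h2' : K * v r₀ * r₀ = K * r₀ * v r₀ := by ring
    linarith [hbound]
  -- contradiction with v → 0
  have hev : ∀ᶠ r in nhdsWithin 0 (Set.Ioi 0), v r₀ / 2 ≤ v r := by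
    filter_upwards [Ioo_mem_nhdsGT hr₀pos] with r hr
    exact hlow r hr.1 hr.2.le
  have : v r₀ / 2 ≤ 0 := ge_of_tendsto hv0 hev
  linarith [hvpos r₀ hr₀pos]
end

section
/- Let n ≥ 2, let m ≥ 0 and k ≥ m + 1 be real numbers, let σ denote the (n−1)-dimensional Hausdorff measure on the unit sphere S^{n−1} ⊂ ℝⁿ, and fix r₀ > 0. Then for every measurable u : S^{n−1} → (0,∞) such that θ ↦ ∫_{r₀}^{u(θ)} t^{n−1+m} dt is σ-integrable with ∫_{S^{n−1}} (∫_{r₀}^{u(θ)} t^{n−1+m} dt) dσ(θ) = 0, one has ∫_{S^{n−1}} u(θ)^{n−1+k} dσ(θ) ≥ r₀^{n−1+k} σ(S^{n−1}). -/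
open MeasureTheory Filter Set

lemma bern_key {p Q r₀ x : ℝ} (hQ : 0 < Q) (hpQ : Q ≤ p) (hr : 0 < r₀) (hx : 0 < x) :
    r₀ ^ p + (p * r₀ ^ (p - Q)) * ((x ^ Q - r₀ ^ Q) / Q) ≤ x ^ p := by
  have hα : 1 ≤ p / Q := (one_le_div hQ).2 hpQ
  have hxr : 0 < x / r₀ := div_pos hx hr
  have hQpos : (0:ℝ) < (x / r₀) ^ Q := Real.rpow_pos_of_pos hxr _
  have hy : -1 ≤ (x / r₀) ^ Q - 1 := by linarith
  have hb := one_add_mul_self_le_rpow_one_add hy hα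
  rw [add_sub_cancel] at hb
  have h1 : ((x / r₀) ^ Q) ^ (p / Q) = (x / r₀) ^ p := by
    rw [← Real.rpow_mul hxr.le]
    congr 1
    field_simp
  rw [h1, Real.div_rpow hx.le hr.le, Real.div_rpow hx.le hr.le] at hb
  have hA : (0:ℝ) < r₀ ^ p := Real.rpow_pos_of_pos hr _
  have hB : (0:ℝ) < r₀ ^ Q := Real.rpow_pos_of_pos hr _
  have h2 : (1 + p / Q * (x ^ Q / r₀ ^ Q - 1)) * r₀ ^ p ≤ x ^ p := (le_div_iff₀ hA).1 hb
  have h3 : r₀ ^ (p - Q) = r₀ ^ p / r₀ ^ Q := Real.rpow_sub hr _ _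
  rw [h3]
  have h4 : r₀ ^ p + p * (r₀ ^ p / r₀ ^ Q) * ((x ^ Q - r₀ ^ Q) / Q) =
      (1 + p / Q * (x ^ Q / r₀ ^ Q - 1)) * r₀ ^ p := by
    field_simp
  linarith

/-- In `ℝⁿ ∖ {0}` with volume density `r^m` and surface density `r^k`
(`m ≥ 0`, `k ≥ m+1`), the sphere of radius `r₀` minimizes tangential surface area among
boundaries of star-shaped regions `{tθ : 0 < t < u(θ)}` of the same weighted volume:
if `∫ (∫_{r₀}^{u θ} t^{n-1+m} dt) dσ = 0` then
`∫ u^{n-1+k} dσ ≥ r₀^{n-1+k} σ(S^{n-1})`. -/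
theorem stmt_18 (n : ℕ) (hn : 2 ≤ n) (m k : ℝ) (hm : 0 ≤ m) (hk : m + 1 ≤ k)
    (r₀ : ℝ) (hr₀ : 0 < r₀)
    (u : EuclideanSpace ℝ (Fin n) → ℝ) (hu : Measurable u)
    (hupos : ∀ θ ∈ Metric.sphere (0 : EuclideanSpace ℝ (Fin n)) 1, 0 < u θ)
    (hwu : IntegrableOn (fun θ => ∫ t in r₀..u θ, t ^ ((n : ℝ) - 1 + m))
      (Metric.sphere (0 : EuclideanSpace ℝ (Fin n)) 1) (μH[(n : ℝ) - 1]))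
    (hwu0 : ∫ θ in Metric.sphere (0 : EuclideanSpace ℝ (Fin n)) 1,
      (∫ t in r₀..u θ, t ^ ((n : ℝ) - 1 + m)) ∂(μH[(n : ℝ) - 1]) = 0) :
    ENNReal.ofReal (r₀ ^ ((n : ℝ) - 1 + k)) *
        μH[(n : ℝ) - 1] (Metric.sphere (0 : EuclideanSpace ℝ (Fin n)) 1) ≤
      ∫⁻ θ in Metric.sphere (0 : EuclideanSpace ℝ (Fin n)) 1,
        ENNReal.ofReal (u θ ^ ((n : ℝ) - 1 + k)) ∂(μH[(n : ℝ) - 1]) := by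
  set S := Metric.sphere (0 : EuclideanSpace ℝ (Fin n)) 1 with hS
  set μ := (μH[(n : ℝ) - 1] : Measure (EuclideanSpace ℝ (Fin n))) with hμ
  set p : ℝ := (n : ℝ) - 1 + k with hp
  set q : ℝ := (n : ℝ) - 1 + m with hq
  have hn1 : (1:ℝ) ≤ (n:ℝ) - 1 := by
    have : (2:ℝ) ≤ (n:ℝ) := by exact_mod_cast hn
    linarith
  have hQ : (0:ℝ) < q + 1 := by simp only [hq]; linarith
  have hpQ : q + 1 ≤ p := by simp only [hp, hq]; linarith
  have hppos : (0:ℝ) < p := lt_of_lt_of_le hQ hpQ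
  -- the interval integral in closed form
  have hint : ∀ x : ℝ, (∫ t in r₀..x, t ^ q) = (x ^ (q+1) - r₀ ^ (q+1)) / (q+1) := by
    intro x
    rw [integral_rpow (Or.inl (by linarith : (-1:ℝ) < q))]
  set C : ℝ := p * r₀ ^ (p - (q+1)) with hC
  have hC0 : 0 ≤ C := by positivity
  -- w = C * interval integral
  set w : EuclideanSpace ℝ (Fin n) → ℝ :=
    fun θ => C * ∫ t in r₀..u θ, t ^ q with hw
  have hwmeas : Measurable w := by
    have : w = fun θ => C * ((u θ ^ (q+1) - r₀ ^ (q+1)) / (q+1)) := by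
      funext θ; simp only [hw, hint]
    rw [this]
    fun_prop
  have hwint : IntegrableOn w S μ := hwu.const_mul C
  have hwzero : ∫ θ in S, w θ ∂μ = 0 := by
    rw [hw]
    simp only []
    rw [integral_const_mul, hwu0, mul_zero]
  -- pointwise inequality
  have hpt : ∀ θ ∈ S, r₀ ^ p + w θ ≤ u θ ^ p := by
    intro θ hθ
    have hb := bern_key hQ hpQ hr₀ (hupos θ hθ) (p := p) (Q := q + 1)
    simp only [hw, hC, hint]
    linarith [hb]
  -- ENNReal pointwise inequality
  have hpt2 : ∀ θ ∈ S, ENNReal.ofReal (r₀ ^ p) + ENNReal.ofReal (w θ) ≤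
      ENNReal.ofReal (u θ ^ p) + ENNReal.ofReal (-(w θ)) := by
    intro θ hθ
    have h := hpt θ hθ
    rcases le_total 0 (w θ) with hw0 | hw0
    · rw [← ENNReal.ofReal_add (by positivity) hw0]
      exact le_trans (ENNReal.ofReal_le_ofReal h) le_self_add
    · rw [ENNReal.ofReal_eq_zero.2 hw0, add_zero]
      calc ENNReal.ofReal (r₀ ^ p) ≤ ENNReal.ofReal (u θ ^ p + -(w θ)) :=
            ENNReal.ofReal_le_ofReal (by linarith)
        _ ≤ _ := ENNReal.ofReal_add_le
  -- integrate
  have hmono : ∫⁻ θ in S, (ENNReal.ofReal (r₀ ^ p) + ENNReal.ofReal (w θ)) ∂μ ≤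
      ∫⁻ θ in S, (ENNReal.ofReal (u θ ^ p) + ENNReal.ofReal (-(w θ))) ∂μ :=
    setLIntegral_mono (by fun_prop) hpt2
  rw [lintegral_add_left measurable_const, setLIntegral_const] at hmono
  rw [lintegral_add_left (by fun_prop : Measurable fun θ => ENNReal.ofReal (u θ ^ p))] at hmono
  -- pos part = neg part
  have hI := integral_eq_lintegral_pos_part_sub_lintegral_neg_part hwint
  rw [hwzero] at hI
  have hneg_fin : ∫⁻ θ in S, ENNReal.ofReal (-(w θ)) ∂μ ≠ ⊤ := by
    have hb : ∀ θ, ENNReal.ofReal (-(w θ)) ≤ ‖w θ‖₊ := by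
      intro θ
      rw [← enorm_eq_nnnorm, ← ofReal_norm]
      exact ENNReal.ofReal_le_ofReal (neg_le_abs _)
    exact ne_top_of_le_ne_top hwint.2.ne (lintegral_mono hb)
  have hpos_fin : ∫⁻ θ in S, ENNReal.ofReal (w θ) ∂μ ≠ ⊤ := by
    have hb : ∀ θ, ENNReal.ofReal (w θ) ≤ ‖w θ‖₊ := by
      intro θ
      rw [← enorm_eq_nnnorm, ← ofReal_norm]
      exact ENNReal.ofReal_le_ofReal (le_abs_self _)
    exact ne_top_of_le_ne_top hwint.2.ne (lintegral_mono hb)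
  have hposneg : ∫⁻ θ in S, ENNReal.ofReal (w θ) ∂μ =
      ∫⁻ θ in S, ENNReal.ofReal (-(w θ)) ∂μ := by
    have := sub_eq_zero.1 hI.symm
    exact (ENNReal.toReal_eq_toReal_iff' hpos_fin hneg_fin).1 this
  rw [hposneg] at hmono
  exact (ENNReal.add_le_add_iff_right hneg_fin).1 hmono
end

section
/- Let n ≥ 2, let p < −n, and let φ : (0,∞) → ℝ be twice continuously differentiable with φ″ ≥ 0 and φ′ ≤ 0. Let σ denote the (n−1)-dimensional Hausdorff measure on the unit sphere S^{n−1} ⊂ ℝⁿ, fix r₀ > 0, and set w(ρ) = ∫_{r₀}^{ρ} t^{n−1+p} e^{φ(t)} dt (finite for all ρ > 0). Then for every measurable u : S^{n−1} → (0,∞) with w ∘ u σ-integrable and ∫_{S^{n−1}} w(u(θ)) dσ(θ) = 0, one has ∫_{S^{n−1}} u(θ)^{n−1+p} e^{φ(u(θ))} dσ(θ) ≥ r₀^{n−1+p} e^{φ(r₀)} σ(S^{n−1}). -/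
open MeasureTheory Filter Set

lemma stmt19_key (a : ℝ) (ha : a < -1) (φ φ' φ'' : ℝ → ℝ)
    (hφ' : ∀ r > (0:ℝ), HasDerivAt φ (φ' r) r)
    (hφ'' : ∀ r > (0:ℝ), HasDerivAt φ' (φ'' r) r)
    (hφ''nn : ∀ r > (0:ℝ), 0 ≤ φ'' r)
    (r₀ : ℝ) (hr₀ : 0 < r₀)
    (hint : ∀ ρ > (0:ℝ), IntervalIntegrable (fun t => t ^ a * Real.exp (φ t)) volume r₀ ρ)
    (ρ : ℝ) (hρ : 0 < ρ) :
    r₀ ^ a * Real.exp (φ r₀) + (a / r₀ + φ' r₀) * (∫ t in r₀..ρ, t ^ a * Real.exp (φ t))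
      ≤ ρ ^ a * Real.exp (φ ρ) := by
  set f : ℝ → ℝ := fun t => t ^ a * Real.exp (φ t) with hf
  set g : ℝ → ℝ := fun t => a / t + φ' t with hg
  set k : ℝ := g r₀ with hk
  set W : ℝ → ℝ := fun x => ∫ t in r₀..x, f t with hW
  set F : ℝ → ℝ := fun x => f x - k * W x with hF
  have hfpos : ∀ x > (0:ℝ), 0 < f x := fun x hx =>
    mul_pos (Real.rpow_pos_of_pos hx a) (Real.exp_pos _)
  have hfd : ∀ x > (0:ℝ), HasDerivAt f (g x * f x) x := by
    intro x hx
    have h1 : HasDerivAt (fun t : ℝ => t ^ a) (a * x ^ (a - 1)) x :=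
      Real.hasDerivAt_rpow_const (Or.inl hx.ne')
    have h2 : HasDerivAt (fun t => Real.exp (φ t)) (Real.exp (φ x) * φ' x) x :=
      (hφ' x hx).exp
    have := h1.mul h2
    refine this.congr_deriv ?_
    rw [hg, hf, Real.rpow_sub_one hx.ne']
    ring
  have hfc : ContinuousOn f (Ioi 0) := fun x hx =>
    (hfd x hx).continuousAt.continuousWithinAt
  have hWd : ∀ x > (0:ℝ), HasDerivAt W (f x) x := by
    intro x hx
    exact intervalIntegral.integral_hasDerivAt_right (hint x hx)
      (hfc.stronglyMeasurableAtFilter isOpen_Ioi x hx) (hfd x hx).continuousAt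
  have hFd : ∀ x > (0:ℝ), HasDerivAt F ((g x - k) * f x) x := by
    intro x hx
    have := (hfd x hx).sub ((hWd x hx).const_mul k)
    refine this.congr_deriv ?_
    ring
  -- g is monotone on Ioi 0
  have hgd : ∀ x > (0:ℝ), HasDerivAt g (a * -(x ^ 2)⁻¹ + φ'' x) x := by
    intro x hx
    have h1 : HasDerivAt (fun t : ℝ => a / t) (a * -(x ^ 2)⁻¹) x := by
      simpa [div_eq_mul_inv] using ((hasDerivAt_inv hx.ne').const_mul a)
    exact h1.add (hφ'' x hx)
  have hgmono : MonotoneOn g (Ioi 0) := by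
    apply monotoneOn_of_deriv_nonneg (convex_Ioi 0)
      (fun x hx => (hgd x hx).continuousAt.continuousWithinAt)
    · rw [interior_Ioi]
      exact fun x hx => (hgd x hx).differentiableAt.differentiableWithinAt
    · rw [interior_Ioi]
      intro x hx
      have hx0 : (0:ℝ) < x := hx
      rw [(hgd x hx).deriv]
      have h2 : (0:ℝ) < (x ^ 2)⁻¹ := by positivity
      nlinarith [hφ''nn x hx]
  have hFr₀ : F r₀ = f r₀ := by simp [hF, hW]
  rcases le_total ρ r₀ with hle | hle
  · -- F antitone on Ioc 0 r₀
    have hanti : AntitoneOn F (Ioc 0 r₀) := by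
      apply antitoneOn_of_deriv_nonpos (convex_Ioc 0 r₀)
        (fun x hx => (hFd x hx.1).continuousAt.continuousWithinAt)
      · rw [interior_Ioc]
        exact fun x hx => (hFd x hx.1).differentiableAt.differentiableWithinAt
      · rw [interior_Ioc]
        intro x hx
        rw [(hFd x hx.1).deriv]
        have hgle : g x ≤ k := hgmono hx.1 hr₀ hx.2.le
        nlinarith [hfpos x hx.1]
    have := hanti ⟨hρ, hle⟩ ⟨hr₀, le_refl r₀⟩ hle
    rw [hFr₀] at this
    simp only [hF, hW, hk, hg, hf] at this
    linarith
  · -- F monotone on Ici r₀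
    have hmono : MonotoneOn F (Ici r₀) := by
      apply monotoneOn_of_deriv_nonneg (convex_Ici r₀)
        (fun x hx => (hFd x (hr₀.trans_le hx)).continuousAt.continuousWithinAt)
      · rw [interior_Ici]
        exact fun x hx => (hFd x (hr₀.trans hx)).differentiableAt.differentiableWithinAt
      · rw [interior_Ici]
        intro x hx
        rw [(hFd x (hr₀.trans hx)).deriv]
        have hgle : k ≤ g x := hgmono hr₀ (hr₀.trans hx) hx.le
        nlinarith [hfpos x (hr₀.trans hx)]
    have := hmono (le_refl r₀ : r₀ ∈ Ici r₀) hle hle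
    rw [hFr₀] at this
    simp only [hF, hW, hk, hg, hf] at this
    linarith

/-- In `ℝⁿ ∖ {0}` with simple density `r^p e^{φ(r)}`, `p < -n`, `φ`
twice continuously differentiable with `φ'' ≥ 0` and `φ' ≤ 0`, the sphere of radius `r₀`
minimizes tangential surface area among boundaries of star-shaped regions enclosing the
same weighted volume: if `∫ w(u θ) dσ = 0` with
`w(ρ) = ∫_{r₀}^ρ t^{n-1+p} e^{φ(t)} dt`, then
`∫ u^{n-1+p} e^{φ∘u} dσ ≥ r₀^{n-1+p} e^{φ(r₀)} σ(S^{n-1})`. -/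
theorem stmt_19 (n : ℕ) (hn : 2 ≤ n) (p : ℝ) (hp : p < -(n : ℝ))
    (φ φ' φ'' : ℝ → ℝ)
    (hφ' : ∀ r > (0:ℝ), HasDerivAt φ (φ' r) r)
    (hφ'' : ∀ r > (0:ℝ), HasDerivAt φ' (φ'' r) r)
    (hφ''c : ContinuousOn φ'' (Set.Ioi 0))
    (hφ''nn : ∀ r > (0:ℝ), 0 ≤ φ'' r)
    (hφ'np : ∀ r > (0:ℝ), φ' r ≤ 0)
    (r₀ : ℝ) (hr₀ : 0 < r₀)
    (w : ℝ → ℝ) (hw : ∀ ρ > (0:ℝ), w ρ = ∫ t in r₀..ρ, t ^ ((n : ℝ) - 1 + p) * Real.exp (φ t))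
    (hwint : ∀ ρ > (0:ℝ), IntervalIntegrable
      (fun t => t ^ ((n : ℝ) - 1 + p) * Real.exp (φ t)) volume r₀ ρ)
    (u : EuclideanSpace ℝ (Fin n) → ℝ) (hu : Measurable u)
    (hupos : ∀ θ ∈ Metric.sphere (0 : EuclideanSpace ℝ (Fin n)) 1, 0 < u θ)
    (hwu : IntegrableOn (fun θ => w (u θ))
      (Metric.sphere (0 : EuclideanSpace ℝ (Fin n)) 1) (μH[(n : ℝ) - 1]))
    (hwu0 : ∫ θ in Metric.sphere (0 : EuclideanSpace ℝ (Fin n)) 1,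
      w (u θ) ∂(μH[(n : ℝ) - 1]) = 0) :
    ENNReal.ofReal (r₀ ^ ((n : ℝ) - 1 + p) * Real.exp (φ r₀)) *
        μH[(n : ℝ) - 1] (Metric.sphere (0 : EuclideanSpace ℝ (Fin n)) 1) ≤
      ∫⁻ θ in Metric.sphere (0 : EuclideanSpace ℝ (Fin n)) 1,
        ENNReal.ofReal (u θ ^ ((n : ℝ) - 1 + p) * Real.exp (φ (u θ)))
          ∂(μH[(n : ℝ) - 1]) := by
  classical
  set a : ℝ := (n : ℝ) - 1 + p with haa
  have ha : a < -1 := by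
    have : (1:ℝ) ≤ (n:ℝ) := by exact_mod_cast Nat.one_le_of_lt hn
    simp only [haa]; linarith
  set S : Set (EuclideanSpace ℝ (Fin n)) := Metric.sphere 0 1 with hSS
  set μ : Measure (EuclideanSpace ℝ (Fin n)) := μH[(n : ℝ) - 1] with hμμ
  set f : ℝ → ℝ := fun t => t ^ a * Real.exp (φ t) with hff
  set k : ℝ := a / r₀ + φ' r₀ with hkk
  have hfr₀pos : 0 < f r₀ := mul_pos (Real.rpow_pos_of_pos hr₀ a) (Real.exp_pos _)
  have hkneg : k < 0 := by
    have h1 : a / r₀ < 0 := div_neg_of_neg_of_pos (by linarith) hr₀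
    have := hφ'np r₀ hr₀
    simp only [hkk]; linarith
  have hS : MeasurableSet S := Metric.isClosed_sphere.measurableSet
  have hkey : ∀ θ ∈ S, f r₀ + k * w (u θ) ≤ f (u θ) := by
    intro θ hθ
    rw [hw (u θ) (hupos θ hθ)]
    exact stmt19_key a ha φ φ' φ'' hφ' hφ'' hφ''nn r₀ hr₀ hwint (u θ) (hupos θ hθ)
  have hfupos : ∀ θ ∈ S, 0 < f (u θ) := fun θ hθ =>
    mul_pos (Real.rpow_pos_of_pos (hupos θ hθ) a) (Real.exp_pos _)
  rcases eq_or_ne (μ S) ⊤ with hinf | hfin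
  · -- infinite measure case
    obtain ⟨g, hgmeas, hgae⟩ := hwu.aestronglyMeasurable
    set ε : ℝ := f r₀ / (2 * (-k)) with hεε
    have hεpos : 0 < ε := by
      apply div_pos hfr₀pos; linarith
    have hgint : Integrable g (μ.restrict S) := hwu.congr hgae
    set A : Set (EuclideanSpace ℝ (Fin n)) := {θ | ε ≤ |g θ|} with hAA
    have hAfin : μ.restrict S A < ⊤ := hgint.abs.measure_ge_lt_top hεpos
    have hAc : μ.restrict S Aᶜ = ⊤ := by
      by_contra hne
      have h1 : μ.restrict S univ ≤ μ.restrict S A + μ.restrict S Aᶜ := by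
        rw [← Set.union_compl_self A]; exact measure_union_le _ _
      rw [Measure.restrict_apply_univ, hinf] at h1
      have h2 : (μ.restrict S) A + (μ.restrict S) Aᶜ < ⊤ :=
        ENNReal.add_lt_top.mpr ⟨hAfin, lt_top_iff_ne_top.mpr hne⟩
      exact absurd (lt_of_le_of_lt h1 h2) (by simp)
    have hbound : ∀ᵐ θ ∂(μ.restrict S),
        Aᶜ.indicator (fun _ => ENNReal.ofReal (f r₀ / 2)) θ ≤ ENNReal.ofReal (f (u θ)) := by
      filter_upwards [hgae, ae_restrict_of_forall_mem hS hkey] with θ hθ1 hθ2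
      by_cases hθA : θ ∈ Aᶜ
      · rw [Set.indicator_of_mem hθA]
        apply ENNReal.ofReal_le_ofReal
        have habs : |w (u θ)| < ε := by
          rw [hθ1]
          exact lt_of_not_ge (by simpa [hAA] using hθA)
        have h2 : k * w (u θ) ≥ k * ε := by
          rcases abs_lt.mp habs with ⟨hl, hr⟩
          nlinarith
        have h3 : k * ε = -(f r₀ / 2) := by
          have hkne : k ≠ 0 := ne_of_lt hkneg
          rw [hεε]
          field_simp
        have h2' : -(f r₀ / 2) ≤ k * w (u θ) := by rw [← h3]; exact h2
        clear habs h2 h3 hθA hθ1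
        clear_value ε f k a
        linarith [hθ2, h2']
      · rw [Set.indicator_of_notMem hθA]; exact zero_le
    calc ENNReal.ofReal (f r₀) * μ S ≤ ⊤ := le_top
    _ = ENNReal.ofReal (f r₀ / 2) * μ.restrict S Aᶜ := by
        rw [hAc, ENNReal.mul_top (by simp [ENNReal.ofReal_eq_zero]; linarith)]
    _ = ∫⁻ θ, Aᶜ.indicator (fun _ => ENNReal.ofReal (f r₀ / 2)) θ ∂(μ.restrict S) := by
        have hA : MeasurableSet A := measurableSet_le measurable_const hgmeas.measurable.abs
        rw [lintegral_indicator hA.compl, setLIntegral_const]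
    _ ≤ ∫⁻ θ, ENNReal.ofReal (f (u θ)) ∂(μ.restrict S) := lintegral_mono_ae hbound
  · -- finite measure case
    haveI : IsFiniteMeasure (μ.restrict S) :=
      ⟨by rw [Measure.restrict_apply_univ]; exact lt_top_iff_ne_top.mpr hfin⟩
    set G : EuclideanSpace ℝ (Fin n) → ℝ := fun θ => f r₀ + k * w (u θ) with hGG
    have hGint : Integrable G (μ.restrict S) := (integrable_const _).add (hwu.const_mul k)
    have hGpint : Integrable (fun θ => max (G θ) 0) (μ.restrict S) := hGint.pos_part
    have hGval : ∫ θ, G θ ∂(μ.restrict S) = f r₀ * (μ S).toReal := by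
      have h0 : ∫ θ, k * w (u θ) ∂(μ.restrict S) = 0 := by
        rw [MeasureTheory.integral_const_mul, hwu0, mul_zero]
      rw [integral_add (integrable_const _) (hwu.const_mul k), h0, add_zero, setIntegral_const,
        smul_eq_mul, mul_comm]
      rfl
    calc ENNReal.ofReal (f r₀) * μ S
        = ENNReal.ofReal (f r₀ * (μ S).toReal) := by
          rw [ENNReal.ofReal_mul hfr₀pos.le, ENNReal.ofReal_toReal hfin]
    _ = ENNReal.ofReal (∫ θ, G θ ∂(μ.restrict S)) := by rw [hGval]
    _ ≤ ENNReal.ofReal (∫ θ, max (G θ) 0 ∂(μ.restrict S)) :=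
        ENNReal.ofReal_le_ofReal (integral_mono hGint hGpint fun θ => le_max_left _ _)
    _ = ∫⁻ θ, ENNReal.ofReal (max (G θ) 0) ∂(μ.restrict S) :=
        ofReal_integral_eq_lintegral_ofReal hGpint
          (Filter.Eventually.of_forall fun θ => le_max_right _ _)
    _ ≤ ∫⁻ θ, ENNReal.ofReal (f (u θ)) ∂(μ.restrict S) := by
        apply lintegral_mono_ae
        filter_upwards [ae_restrict_of_forall_mem hS hkey, ae_restrict_of_forall_mem hS hfupos]
          with θ hθ hθ'
        apply ENNReal.ofReal_le_ofReal
        exact max_le hθ hθ'.le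
end
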